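/- arXiv:2103.17180 — 7 statements merged into one kernel-verified Lean document; each statement's English description precedes it below -/
import Mathlib

section
/- The number of parking functions with m cars and n spots is |PF(m,n)| = (n−m+1)(n+1)^{m−1}, for 1 ≤ m ≤ n. -/
open Finset

/-- Goodness of a starting position for the cycle lemma. -/
def GoodS (P t : ℕ) (S : ℕ → ℤ) (p : ℕ) : Prop :=
  ∀ i, 0 < i → i < P → S (p + i) < S p + (t : ℤ)

lemma goodS_per (P t : ℕ) (S : ℕ → ℤ) (hper : ∀ j, S (j + P) = S j + t) (p : ℕ) :
    GoodS P t S (p + P) ↔ GoodS P t S p := by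
  constructor <;> intro h i hi1 hi2
  · have h' := h i hi1 hi2
    have ha := hper (p + i); have hb := hper p
    rw [show p + P + i = p + i + P from by ring] at h'
    omega
  · have h' := h i hi1 hi2
    have ha := hper (p + i); have hb := hper p
    rw [show p + P + i = p + i + P from by ring]
    omega

lemma goodS_add (P t : ℕ) (S : ℕ → ℤ) (hper : ∀ j, S (j + P) = S j + t) (k p : ℕ) :
    GoodS P t S (p + k * P) ↔ GoodS P t S p := by
  induction k with
  | zero => simp
  | succ k ih =>
    rw [show p + (k+1) * P = (p + k * P) + P from by ring,
      goodS_per P t S hper, ih]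

lemma goodS_mod (P t : ℕ) (S : ℕ → ℤ) (hper : ∀ j, S (j + P) = S j + t) (p : ℕ) :
    GoodS P t S (p % P) ↔ GoodS P t S p := by
  conv_rhs => rw [← Nat.mod_add_div p P]
  rw [show p % P + P * (p / P) = p % P + (p / P) * P from by ring,
    goodS_add P t S hper]

lemma cycle_count (P t : ℕ) (hP : 0 < P) (ht : 0 < t) (S : ℕ → ℤ)
    (hS0 : S 0 = 0) (hstep : ∀ j, S (j + 1) ≤ S j + 1)
    (hper : ∀ j, S (j + P) = S j + t) :
    Nat.card {p : Fin P // GoodS P t S p.val} = t := by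
  -- basic facts
  have h1 : ∀ j k : ℕ, S (j + k * P) = S j + k * t := by
    intro j k
    induction k with
    | zero => simp
    | succ k ih =>
      have h := hper (j + k * P)
      rw [show j + (k+1) * P = j + k * P + P from by ring, h, ih]
      push_cast; ring
  have h2 : ∀ j : ℕ, S j ≤ j := by
    intro j
    induction j with
    | zero => simp [hS0]
    | succ j ih => have := hstep j; push_cast; omega
  have hex : ∀ v : ℕ, ∃ j, (v : ℤ) ≤ S j := by
    intro v
    refine ⟨v * P, ?_⟩
    have := h1 0 v
    simp only [Nat.zero_add, hS0, zero_add] at this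
    rw [this]
    have h3 : (v : ℤ) * 1 ≤ (v : ℤ) * t := by
      apply mul_le_mul_of_nonneg_left _ (by positivity)
      exact_mod_cast ht
    omega
  set τ : ℕ → ℕ := fun v => Nat.find (hex v) with hτ
  have hτ_spec : ∀ v : ℕ, (v : ℤ) ≤ S (τ v) := fun v => Nat.find_spec (hex v)
  have hτ_min : ∀ v j, j < τ v → S j < v := by
    intro v j hj
    exact lt_of_not_ge (Nat.find_min (hex v) hj)
  have hτ_le : ∀ v j : ℕ, (v : ℤ) ≤ S j → τ v ≤ j := fun v j h => Nat.find_min' (hex v) h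
  have hτ_eq : ∀ v, 0 < v → S (τ v) = v := by
    intro v hv
    have hpos : 0 < τ v := by
      rcases Nat.eq_zero_or_pos (τ v) with h | h
      · exfalso; have := hτ_spec v; rw [h, hS0] at this; omega
      · exact h
    have h3 : S (τ v - 1) < v := hτ_min v _ (by omega)
    have h4 : S (τ v) ≤ S (τ v - 1) + 1 := by
      have := hstep (τ v - 1); rwa [Nat.sub_add_cancel hpos] at this
    have := hτ_spec v; omega
  have hτ_ge : ∀ v, v ≤ τ v := by
    intro v
    have ha := hτ_spec v; have hb := h2 (τ v); omega
  have hGoodτ : ∀ v, P ≤ v → GoodS P t S (τ v) := by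
    intro v hv i hi1 hi2
    by_contra hcon
    push_neg at hcon
    have hτv : P ≤ τ v := le_trans hv (hτ_ge v)
    have hj : τ v + i - P + P = τ v + i := by omega
    have h5 := hper (τ v + i - P)
    rw [hj] at h5
    have h6 : S (τ v + i - P) < v := hτ_min v _ (by omega)
    have h7 := hτ_eq v (by omega)
    omega
  have hBelow : ∀ p, GoodS P t S p → P ≤ p → ∀ j, j < p → S j < S p := by
    intro p hp hPp
    have key : ∀ k j, j < p → p ≤ j + (k + 1) * P → S j < S p := by
      intro k
      induction k with
      | zero =>
        intro j hj hj2
        have hq : GoodS P t S (p - P) := by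
          have h := goodS_per P t S hper (p - P)
          rw [show p - P + P = p from by omega] at h
          exact h.mp hp
        have hb := hper (p - P)
        rw [show p - P + P = p from by omega] at hb
        rcases eq_or_lt_of_le (show p - P ≤ j from by omega) with he | hl
        · rw [← he]; omega
        · have := hq (j - (p - P)) (by omega) (by omega)
          rw [show p - P + (j - (p - P)) = j from by omega] at this
          omega
      | succ k ih =>
        intro j hj hj2
        by_cases hc : p ≤ j + (k + 1) * P
        · exact ih j hj hc
        · have hPk : P ≤ (k + 1) * P := Nat.le_mul_of_pos_left P (Nat.succ_pos k)
          have hjP : j + P < p := by omega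
          have h' := ih (j + P) hjP (by
            rw [show j + P + (k + 1) * P = j + (k + 1 + 1) * P from by ring] at *
            omega)
          have := hper j
          omega
    intro j hj
    have hpk : p + 1 ≤ (p + 1) * P := Nat.le_mul_of_pos_right (p + 1) hP
    exact key p j hj (by omega)
  -- the bijection
  have hgoodF : ∀ r : Fin t, GoodS P t S ((τ (P + r.val) % P : ℕ)) := by
    intro r
    exact (goodS_mod P t S hper _).mpr (hGoodτ _ (Nat.le_add_right _ _))
  set F : Fin t → {p : Fin P // GoodS P t S p.val} :=
    fun r => ⟨⟨τ (P + r.val) % P, Nat.mod_lt _ hP⟩, hgoodF r⟩ with hF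
  have hinj : Function.Injective F := by
    have claim : ∀ a b : ℕ, a < t → b < t → a ≤ b →
        τ (P + a) % P = τ (P + b) % P → a = b := by
      intro a b hat hbt hab hmod
      have hmono : τ (P + a) ≤ τ (P + b) := by
        apply hτ_le
        have := hτ_spec (P + b)
        have : ((P + a : ℕ) : ℤ) ≤ ((P + b : ℕ) : ℤ) := by push_cast; omega
        calc ((P + a : ℕ) : ℤ) ≤ ((P + b : ℕ) : ℤ) := this
          _ ≤ S (τ (P + b)) := hτ_spec (P + b)
      have hdvd : P ∣ τ (P + b) - τ (P + a) :=
        (Nat.modEq_iff_dvd' hmono).mp hmod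
      obtain ⟨k, hk⟩ := hdvd
      have hkb : τ (P + b) = τ (P + a) + P * k := by omega
      have hSa := hτ_eq (P + a) (by omega)
      have hSb := hτ_eq (P + b) (by omega)
      have hh := h1 (τ (P + a)) k
      rw [show τ (P + a) + k * P = τ (P + b) from by rw [hkb]; ring] at hh
      rcases Nat.eq_zero_or_pos k with hk0 | hk1
      · subst hk0; simp at hh; push_cast at *; omega
      · exfalso
        have hkt : (t : ℤ) * 1 ≤ (t : ℤ) * k := by
          apply mul_le_mul_of_nonneg_left _ (by positivity)
          exact_mod_cast hk1
        push_cast at *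
        nlinarith [hSa, hSb, hh]
    intro r r' h
    have hmod : τ (P + r.val) % P = τ (P + r'.val) % P := by
      have := congrArg (fun x => (x.1 : Fin P).val) h
      simpa [hF] using this
    rcases le_total r.val r'.val with hle | hle
    · exact Fin.ext (claim r.val r'.val r.isLt r'.isLt hle hmod)
    · exact Fin.ext ((claim r'.val r.val r'.isLt r.isLt hle hmod.symm)).symm
  have hsurj : Function.Surjective F := by
    rintro ⟨⟨p, hp⟩, hgood⟩
    simp only at hgood
    have hSp : S p < P := lt_of_le_of_lt (h2 p) (by exact_mod_cast hp)
    have hexK : ∃ K : ℕ, (P : ℤ) ≤ S p + K * t := by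
      refine ⟨((P : ℤ) - S p).toNat, ?_⟩
      have h3 := Int.self_le_toNat ((P : ℤ) - S p)
      have h4 : (((P : ℤ) - S p).toNat : ℤ) * 1 ≤ (((P : ℤ) - S p).toNat : ℤ) * t := by
        apply mul_le_mul_of_nonneg_left _ (by positivity)
        exact_mod_cast ht
      omega
    set K : ℕ := Nat.find hexK with hKdef
    have hK1 : (P : ℤ) ≤ S p + K * t := Nat.find_spec hexK
    have hK0 : K ≠ 0 := by
      intro h
      rw [h] at hK1; simp at hK1; omega
    have hK2 : S p + K * t < P + t := by
      by_contra hcon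
      push_neg at hcon
      have hmin := Nat.find_min hexK (show K - 1 < K from by omega)
      apply hmin
      have hc : ((K - 1 : ℕ) : ℤ) = (K : ℤ) - 1 := by
        have : 1 ≤ K := by omega
        push_cast [this]; ring
      rw [hc]
      have : ((K : ℤ) - 1) * t = (K : ℤ) * t - t := by ring
      rw [this]
      omega
    set q : ℕ := p + K * P with hqdef
    have hSq : S q = S p + K * t := h1 p K
    have hq_good : GoodS P t S q := (goodS_add P t S hper K p).mpr hgood
    have hqP : P ≤ q := by
      have : P ≤ K * P := Nat.le_mul_of_pos_left P (by omega)
      omega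
    set r : ℕ := (S p + K * t - P).toNat with hrdef
    have hr : (r : ℤ) = S p + (K : ℤ) * t - P := by
      rw [hrdef]
      exact Int.toNat_of_nonneg (by omega)
    have hrt : r < t := by omega
    have hSq' : S q = (P : ℤ) + r := by omega
    have hbelow := hBelow q hq_good hqP
    have hτq : τ (P + r) = q := by
      apply le_antisymm
      · apply hτ_le
        rw [hSq']; push_cast; omega
      · by_contra hlt
        push_neg at hlt
        have hb := hbelow _ hlt
        have hs := hτ_spec (P + r)
        rw [hSq'] at hb
        push_cast at hs
        omega
    refine ⟨⟨r, hrt⟩, ?_⟩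
    apply Subtype.ext
    apply Fin.ext
    show τ (P + r) % P = p
    rw [hτq, hqdef, Nat.add_mul_mod_self_right, Nat.mod_eq_of_lt hp]
  have := Nat.card_eq_of_bijective F ⟨hinj, hsurj⟩
  rw [← this]
  simp

/-- `π ∈ PF(m,n)`: a sequence in `[n]^m` satisfying the pigeonhole criterion
`#{k : π k ≤ i} ≥ m - n + i` for all `i = n-m+1, …, n`, which is equivalent to
all `m` cars parking successfully under the sequential parking rule. -/
def IsPF (m n : ℕ) (π : Fin m → ℕ) : Prop :=
  (∀ k, 1 ≤ π k ∧ π k ≤ n) ∧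
  ∀ i, i ≤ n → n - m + 1 ≤ i →
    m + i - n ≤ ((Finset.univ : Finset (Fin m)).filter (fun k => π k ≤ i)).card

def GoodF (m n : ℕ) (h : Fin m → Fin (n+1)) : Prop := IsPF m n (fun k => (h k : ℕ) + 1)

lemma goodF_iff (m n : ℕ) (hm : 1 ≤ m) (hmn : m ≤ n) (h : Fin m → Fin (n+1)) :
    GoodF m n h ↔ ∀ i, 1 ≤ i → i ≤ n →
      m + i - n ≤ (univ.filter fun k => (h k : ℕ) + 1 ≤ i).card := by
  constructor
  · rintro ⟨h1, h2⟩ i hi1 hi2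
    by_cases hc : n - m + 1 ≤ i
    · exact h2 i hi2 hc
    · have : m + i - n = 0 := by omega
      omega
  · intro H
    constructor
    · intro k
      refine ⟨Nat.succ_le_succ (Nat.zero_le _), ?_⟩
      have hn : 1 ≤ n := le_trans hm hmn
      have := H n hn le_rfl
      have hcard : (univ.filter fun k => (h k : ℕ) + 1 ≤ n).card = m := by
        apply le_antisymm
        · calc (univ.filter fun k => (h k : ℕ) + 1 ≤ n).card
              ≤ (univ : Finset (Fin m)).card := Finset.card_filter_le _ _
            _ = m := by simp
        · omega
      have huniv : (univ.filter fun k => (h k : ℕ) + 1 ≤ n) = univ := by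
        apply Finset.eq_of_subset_of_card_le (Finset.filter_subset _ _)
        rw [hcard]; simp
      have : k ∈ univ.filter fun k => (h k : ℕ) + 1 ≤ n := by rw [huniv]; exact mem_univ k
      exact (Finset.mem_filter.mp this).2
    · intro i hi hi2
      exact H i (by omega) hi

section SG
variable (m n : ℕ) (g : Fin m → Fin (n+1))

def Ng : ℕ → ℕ := fun s => (univ.filter fun k => (g k : ℕ) = s % (n+1)).card

def Sg : ℕ → ℤ := fun j => (j : ℤ) - ∑ s ∈ range j, (Ng m n g s : ℤ)

lemma Sg_zero : Sg m n g 0 = 0 := by simp [Sg]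

lemma Sg_step (j : ℕ) : Sg m n g (j + 1) ≤ Sg m n g j + 1 := by
  simp only [Sg, Finset.sum_range_succ]
  push_cast
  have : (0 : ℤ) ≤ (Ng m n g j : ℤ) := by positivity
  omega

lemma Ng_per (j : ℕ) : Ng m n g (j + (n+1)) = Ng m n g j := by
  simp [Ng, Nat.add_mod_right]

lemma Ng_total : ∑ s ∈ range (n+1), Ng m n g s = m := by
  have h := Finset.card_eq_sum_card_fiberwise
    (f := fun k => (g k : ℕ)) (s := (univ : Finset (Fin m))) (t := range (n+1))
    (fun k _ => mem_range.mpr (g k).isLt)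
  have h2 : ∑ s ∈ range (n+1), Ng m n g s
      = ∑ s ∈ range (n+1), (univ.filter fun k => (g k : ℕ) = s).card := by
    apply Finset.sum_congr rfl
    intro s hs
    rw [Ng, Nat.mod_eq_of_lt (mem_range.mp hs)]
  rw [h2, ← h]
  simp

lemma Ng_Ico (j : ℕ) : ∑ s ∈ Ico j (j + (n+1)), Ng m n g s = m := by
  induction j with
  | zero => simpa [← Finset.range_eq_Ico] using Ng_total m n g
  | succ j ih =>
    have h1 : ∑ s ∈ Ico j (j + (n+1)), Ng m n g s
        = Ng m n g j + ∑ s ∈ Ico (j+1) (j + (n+1)), Ng m n g s :=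
      Finset.sum_eq_sum_Ico_succ_bot (by omega) _
    have h2 : ∑ s ∈ Ico (j+1) (j + 1 + (n+1)), Ng m n g s
        = ∑ s ∈ Ico (j+1) (j + (n+1)), Ng m n g s + Ng m n g (j + (n+1)) := by
      rw [show j + 1 + (n+1) = (j + (n+1)) + 1 from by ring]
      exact Finset.sum_Ico_succ_top (by omega) _
    rw [h2, Ng_per]
    omega

lemma Sg_per (hmn : m ≤ n) (j : ℕ) :
    Sg m n g (j + (n+1)) = Sg m n g j + ((n + 1 - m : ℕ) : ℤ) := by
  have hsplit : ∑ s ∈ range j, (Ng m n g s : ℤ) + ∑ s ∈ Ico j (j + (n+1)), (Ng m n g s : ℤ)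
      = ∑ s ∈ range (j + (n+1)), (Ng m n g s : ℤ) := by
    simp only [Finset.range_eq_Ico]
    exact Finset.sum_Ico_consecutive _ (Nat.zero_le j) (by omega)
  have hIco : ∑ s ∈ Ico j (j + (n+1)), (Ng m n g s : ℤ) = (m : ℤ) := by
    rw [← Nat.cast_sum]
    exact_mod_cast congrArg (Nat.cast (R := ℤ)) (Ng_Ico m n g j)
  simp only [Sg]
  rw [← hsplit, hIco]
  push_cast [Nat.sub_add_cancel]
  omega

end SG

section Shift
variable (m n : ℕ) (g : Fin m → Fin (n+1)) (c : Fin (n+1))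

lemma fin_add_eq_iff (k : Fin m) (j : ℕ) (hj : j < n + 1) :
    ((g k + c : Fin (n+1)) : ℕ) = j ↔ (g k : ℕ) = ((n+1) - (c : ℕ) + j) % (n+1) := by
  constructor
  · intro h
    have h1 : g k + c = ⟨j, hj⟩ := Fin.ext h
    have h2 : g k = ⟨j, hj⟩ - c := by rw [← h1]; exact (add_sub_cancel_right _ _).symm
    rw [h2, Fin.sub_def]
  · intro h
    have h2 : g k = ⟨j, hj⟩ - c := by
      apply Fin.ext
      rw [Fin.sub_def]
      exact h
    rw [h2]
    have : (⟨j, hj⟩ - c) + c = (⟨j, hj⟩ : Fin (n+1)) := sub_add_cancel _ _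
    rw [this]

lemma card_shift (i : ℕ) (hi : i ≤ n + 1) :
    (univ.filter fun k => ((g k + c : Fin (n+1)) : ℕ) + 1 ≤ i).card
      = ∑ j ∈ range i, Ng m n g ((n+1) - (c : ℕ) + j) := by
  have h := Finset.card_eq_sum_card_fiberwise
    (f := fun k => ((g k + c : Fin (n+1)) : ℕ))
    (s := univ.filter fun k => ((g k + c : Fin (n+1)) : ℕ) + 1 ≤ i) (t := range i)
    (fun k hk => mem_range.mpr (by
      show ((g k + c : Fin (n+1)) : ℕ) < i
      have := (mem_filter.mp hk).2; omega))
  rw [h]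
  apply Finset.sum_congr rfl
  intro j hj
  have hj' : j < i := mem_range.mp hj
  have hfil : ((univ.filter fun k => ((g k + c : Fin (n+1)) : ℕ) + 1 ≤ i).filter
      fun k => ((g k + c : Fin (n+1)) : ℕ) = j)
      = univ.filter fun k => ((g k + c : Fin (n+1)) : ℕ) = j := by
    rw [Finset.filter_filter]
    apply Finset.filter_congr
    intro k _
    constructor
    · rintro ⟨_, h2⟩; exact h2
    · intro h2; exact ⟨by omega, h2⟩
  rw [hfil, Ng]
  congr 1
  apply Finset.filter_congr
  intro k _
  exact fin_add_eq_iff m n g c k j (by omega)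

end Shift

section Translate
variable (m n : ℕ)

lemma Sg_diff (g : Fin m → Fin (n+1)) (c' i : ℕ) :
    Sg m n g (c' + i) = Sg m n g c' + (i : ℤ) - ∑ j ∈ range i, (Ng m n g (c' + j) : ℤ) := by
  have hsplit : ∑ s ∈ range c', (Ng m n g s : ℤ) + ∑ s ∈ Ico c' (c' + i), (Ng m n g s : ℤ)
      = ∑ s ∈ range (c' + i), (Ng m n g s : ℤ) := by
    simp only [Finset.range_eq_Ico]
    exact Finset.sum_Ico_consecutive _ (Nat.zero_le c') (by omega)
  have hre : ∑ s ∈ Ico c' (c' + i), (Ng m n g s : ℤ)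
      = ∑ j ∈ range i, (Ng m n g (c' + j) : ℤ) := by
    rw [Finset.sum_Ico_eq_sum_range]
    simp
  simp only [Sg]
  rw [← hsplit, hre]
  push_cast
  ring

lemma goodF_shift_iff (hm : 1 ≤ m) (hmn : m ≤ n) (g : Fin m → Fin (n+1)) (c : Fin (n+1)) :
    GoodF m n (fun k => g k + c) ↔
      GoodS (n+1) (n+1-m) (Sg m n g) ((n+1) - (c : ℕ)) := by
  rw [goodF_iff m n hm hmn]
  constructor
  · intro H i hi1 hi2
    have hH := H i hi1 (by omega)
    have hcs := card_shift m n g c i (by omega)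
    have hdiff := Sg_diff m n g ((n+1) - (c : ℕ)) i
    have hcast : ((∑ j ∈ range i, Ng m n g ((n+1) - (c : ℕ) + j) : ℕ) : ℤ)
        = ∑ j ∈ range i, (Ng m n g ((n+1) - (c : ℕ) + j) : ℤ) := by push_cast; rfl
    rw [hcs] at hH
    omega
  · intro H i hi1 hi2
    have hG := H i hi1 (by omega)
    have hcs := card_shift m n g c i (by omega)
    have hdiff := Sg_diff m n g ((n+1) - (c : ℕ)) i
    have hcast : ((∑ j ∈ range i, Ng m n g ((n+1) - (c : ℕ) + j) : ℕ) : ℤ)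
        = ∑ j ∈ range i, (Ng m n g ((n+1) - (c : ℕ) + j) : ℤ) := by push_cast; rfl
    rw [hcs]
    omega

lemma count_c (hm : 1 ≤ m) (hmn : m ≤ n) (g : Fin m → Fin (n+1)) :
    Nat.card {c : Fin (n+1) // GoodF m n (fun k => g k + c)} = n + 1 - m := by
  have hcy := cycle_count (n+1) (n+1-m) (by omega) (by omega) (Sg m n g)
    (Sg_zero m n g) (Sg_step m n g) (fun j => Sg_per m n g hmn j)
  rw [← hcy]
  apply Nat.card_congr
  refine Equiv.subtypeEquiv (Equiv.neg (Fin (n+1))) ?_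
  intro c
  show GoodF m n (fun k => g k + c) ↔ GoodS (n+1) (n+1-m) (Sg m n g) ((-c : Fin (n+1)) : ℕ)
  have hneg : ((-c : Fin (n+1)) : ℕ) = ((n+1) - (c : ℕ)) % (n+1) := by
    have h0 : -c = 0 - c := (zero_sub c).symm
    rw [h0, Fin.sub_def]
    simp
  rw [hneg, goodS_mod _ _ _ (fun j => Sg_per m n g hmn j)]
  exact goodF_shift_iff m n hm hmn g c

end Translate

section Main
variable (m n : ℕ)

lemma card_isPF_eq :
    Nat.card {π : Fin m → ℕ // IsPF m n π}
      = Nat.card {h : Fin m → Fin (n+1) // GoodF m n h} := by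
  apply Nat.card_congr
  refine ⟨fun p => ⟨fun k => ⟨p.1 k - 1, by have := (p.2.1 k).2; omega⟩, ?_⟩,
    fun h => ⟨fun k => (h.1 k : ℕ) + 1, h.2⟩, ?_, ?_⟩
  · have hfun : (fun k => ((⟨p.1 k - 1, by have := (p.2.1 k).2; omega⟩ : Fin (n+1)) : ℕ) + 1)
        = p.1 := funext fun k => by
      show (p.1 k - 1) + 1 = p.1 k
      have := (p.2.1 k).1; omega
    show IsPF m n _
    rw [hfun]
    exact p.2
  · intro p
    apply Subtype.ext
    funext k
    show (p.1 k - 1) + 1 = p.1 k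
    have := (p.2.1 k).1; omega
  · intro h
    apply Subtype.ext
    funext k
    apply Fin.ext
    show ((h.1 k : ℕ) + 1) - 1 = (h.1 k : ℕ)
    omega

def shiftEquiv : ((Fin m → Fin (n+1)) × Fin (n+1)) ≃ ((Fin m → Fin (n+1)) × Fin (n+1)) where
  toFun p := (fun k => p.1 k + p.2, p.2)
  invFun p := (fun k => p.1 k - p.2, p.2)
  left_inv p := by
    obtain ⟨f, c⟩ := p
    simp only [Prod.mk.injEq]
    refine ⟨funext fun k => by simp, trivial⟩
  right_inv p := by
    obtain ⟨f, c⟩ := p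
    simp only [Prod.mk.injEq]
    refine ⟨funext fun k => by simp, trivial⟩

lemma pairs_eq_card :
    Nat.card {p : (Fin m → Fin (n+1)) × Fin (n+1) // GoodF m n (fun k => p.1 k + p.2)}
      = Nat.card {h : Fin m → Fin (n+1) // GoodF m n h} * (n + 1) := by
  have e3 : {p : (Fin m → Fin (n+1)) × Fin (n+1) // GoodF m n (fun k => p.1 k + p.2)}
      ≃ {p : (Fin m → Fin (n+1)) × Fin (n+1) // GoodF m n p.1} :=
    Equiv.subtypeEquiv (shiftEquiv m n) (fun p => Iff.rfl)
  have e4 : {p : (Fin m → Fin (n+1)) × Fin (n+1) // GoodF m n p.1}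
      ≃ {h : Fin m → Fin (n+1) // GoodF m n h} × Fin (n+1) :=
    ⟨fun p => (⟨p.1.1, p.2⟩, p.1.2), fun q => ⟨(q.1.1, q.2), q.1.2⟩,
      fun p => rfl, fun q => rfl⟩
  rw [Nat.card_congr (e3.trans e4), Nat.card_prod]
  simp

lemma pairs_eq_sigma (hm : 1 ≤ m) (hmn : m ≤ n) :
    Nat.card {p : (Fin m → Fin (n+1)) × Fin (n+1) // GoodF m n (fun k => p.1 k + p.2)}
      = (n + 1) ^ m * (n + 1 - m) := by
  classical
  have e2 := Equiv.subtypeProdEquivSigmaSubtype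
    (fun (h : Fin m → Fin (n+1)) (c : Fin (n+1)) => GoodF m n (fun k => h k + c))
  refine Eq.trans (Nat.card_congr e2) ?_
  rw [Nat.card_eq_fintype_card, Fintype.card_sigma]
  have hc : ∀ h : Fin m → Fin (n+1),
      Fintype.card {c // GoodF m n (fun k => h k + c)} = n + 1 - m := by
    intro h
    rw [← Nat.card_eq_fintype_card]
    exact count_c m n hm hmn h
  rw [Finset.sum_congr rfl (fun h _ => hc h)]
  simp [Finset.sum_const, Fintype.card_fun]

end Main

/-- `|PF(m,n)| = (n - m + 1)(n + 1)^(m - 1)` for `1 ≤ m ≤ n`. -/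
theorem card_PF (m n : ℕ) (hm : 1 ≤ m) (hmn : m ≤ n) :
    Nat.card {π : Fin m → ℕ // IsPF m n π} = (n - m + 1) * (n + 1) ^ (m - 1) := by
  rw [card_isPF_eq m n]
  have h4 : Nat.card {h : Fin m → Fin (n+1) // GoodF m n h} * (n + 1)
      = (n + 1) ^ m * (n + 1 - m) := by
    rw [← pairs_eq_card m n, pairs_eq_sigma m n hm hmn]
  have hpow : (n + 1) ^ m = (n + 1) ^ (m - 1) * (n + 1) := by
    conv_lhs => rw [show m = (m - 1) + 1 from by omega]
    rw [pow_succ]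
  have h5 : Nat.card {h : Fin m → Fin (n+1) // GoodF m n h} * (n + 1)
      = (n - m + 1) * (n + 1) ^ (m - 1) * (n + 1) := by
    rw [h4, hpow]
    have heq : n + 1 - m = n - m + 1 := by omega
    rw [heq]
    ring
  exact Nat.eq_of_mul_eq_mul_right (by omega) h5
end

section
/- For k ≥ n−m+1, the set A_{π₂,...,π_m} equals [k] if and only if (π₂,...,π_m) is a shuffle of a parking function α ∈ PF(m−n+k−1, k−1) and a word β' with β' − (k,...,k) ∈ PF(n−k, n−k); that is, exactly m−n+k−1 of the entries π₂,...,π_m are < k, none equal k, the subsequence of entries < k is in PF(m−n+k−1, k−1), and the subsequence of entries > k, after subtracting k from each, is in PF(n−k, n−k). -/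
/-- `PF(m,n)` membership for a multiset of preferences (parking functions are
permutation invariant, so membership depends only on the multiset of values). -/
def IsPFM (m n : ℕ) (M : Multiset ℕ) : Prop :=
  Multiset.card M = m ∧ (∀ x ∈ M, 1 ≤ x ∧ x ≤ n) ∧
  ∀ i, i ≤ n → n - m + 1 ≤ i → m + i - n ≤ Multiset.card (M.filter (· ≤ i))

theorem card_filter_eq_countP (N : ℕ) (f : Fin N → ℕ) (q : ℕ → Prop) [DecidablePred q] :
    ((Finset.univ : Finset (Fin N)).filter (fun l => q (f l))).card
      = (List.ofFn f).countP (fun x => decide (q x)) := by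
  induction N with
  | zero => simp
  | succ N ih =>
    rw [List.ofFn_succ, List.countP_cons, Finset.card_filter, Fin.sum_univ_succ,
      ← Finset.card_filter, ih (fun i => f i.succ)]
    by_cases h : q (f 0) <;> simp [h, Nat.add_comm]

theorem countP_split (l : List ℕ) (p q : ℕ → Bool) :
    l.countP p = l.countP (fun x => p x && q x) + l.countP (fun x => p x && !q x) := by
  induction l with
  | nil => simp
  | cons a l ih =>
    simp only [List.countP_cons, ih]
    cases hp : p a <;> cases hq : q a <;> simp [hp, hq] <;> omega

theorem isPF_cons_iff (m n : ℕ) (hmn : m + 1 ≤ n) (ρ : Fin m → ℕ)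
    (hval : ∀ i, 1 ≤ ρ i ∧ ρ i ≤ n) (j : ℕ) :
    IsPF (m + 1) n (Fin.cons j ρ) ↔
      (1 ≤ j ∧ j ≤ n) ∧ ∀ i, i ≤ n → n - m ≤ i →
        m + 1 + i - n ≤ (List.ofFn ρ).countP (fun x => decide (x ≤ i))
          + (if j ≤ i then 1 else 0) := by
  have hcard : ∀ i : ℕ,
      ((Finset.univ : Finset (Fin (m+1))).filter (fun l => (Fin.cons j ρ : Fin (m+1) → ℕ) l ≤ i)).card
      = (List.ofFn ρ).countP (fun x => decide (x ≤ i)) + (if j ≤ i then 1 else 0) := by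
    intro i
    rw [card_filter_eq_countP (m+1) (Fin.cons j ρ : Fin (m+1) → ℕ) (· ≤ i), List.ofFn_succ]
    simp only [Fin.cons_succ, Fin.cons_zero, List.countP_cons]
    by_cases h : j ≤ i <;> simp [h]
  unfold IsPF
  constructor
  · rintro ⟨h1, h2⟩
    refine ⟨h1 0, fun i hi1 hi2 => ?_⟩
    have := h2 i hi1 (by omega)
    rwa [hcard i] at this
  · rintro ⟨h1, h2⟩
    constructor
    · intro l
      induction l using Fin.cases with
      | zero => simpa using h1
      | succ l' => simpa using hval l'
    · intro i hi1 hi2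
      rw [hcard i]
      exact h2 i hi1 (by omega)

theorem step2 (m n k : ℕ) (hmn : m + 1 ≤ n) (hk1 : n - m ≤ k) (hk2 : k ≤ n)
    (L : List ℕ) (hlen : L.length = m) (hmemL : ∀ x ∈ L, 1 ≤ x ∧ x ≤ n) :
    ((∀ i, i ≤ n → n - m ≤ i →
        m + 1 + i - n ≤ L.countP (fun x => decide (x ≤ i)) + (if k ≤ i then 1 else 0))
      ∧ L.countP (fun x => decide (x ≤ k)) = m + k - n) ↔
      (L.countP (fun x => decide (x = k)) = 0 ∧
        IsPFM (m + 1 + k - n - 1) (k - 1) ((↑L : Multiset ℕ).filter (· < k)) ∧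
        IsPFM (n - k) (n - k)
          (((↑L : Multiset ℕ).filter (fun x => k < x)).map (fun x => x - k))) := by
  have hk0 : 1 ≤ k := by omega
  have hCn : L.countP (fun x => decide (x ≤ n)) = m := by
    rw [← hlen, List.countP_eq_length]
    intro x hx; simpa using (hmemL x hx).2
  have hsplit_k : L.countP (fun x => decide (x ≤ k))
      = L.countP (fun x => decide (x < k)) + L.countP (fun x => decide (x = k)) := by
    rw [countP_split L (fun x => decide (x ≤ k)) (fun x => decide (x < k))]
    congr 1
    · apply List.countP_congr; intro x _; simp; omega
    · apply List.countP_congr; intro x _; simp; omega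
  have hsplit_km : L.countP (fun x => decide (x ≤ k))
      = L.countP (fun x => decide (x ≤ k - 1)) + L.countP (fun x => decide (x = k)) := by
    rw [countP_split L (fun x => decide (x ≤ k)) (fun x => decide (x ≤ k - 1))]
    congr 1
    · apply List.countP_congr; intro x _; simp; omega
    · apply List.countP_congr; intro x _; simp; omega
  have hsplit_hi : ∀ j, k ≤ j → L.countP (fun x => decide (x ≤ j))
      = L.countP (fun x => decide (x ≤ k))
        + L.countP (fun x => decide (k < x) && decide (x ≤ j)) := by
    intro j hj
    rw [countP_split L (fun x => decide (x ≤ j)) (fun x => decide (x ≤ k))]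
    congr 1
    · apply List.countP_congr; intro x _; simp; omega
    · apply List.countP_congr; intro x _; simp; omega
  have hlow : ∀ i, i < k → L.countP (fun x => decide (x ≤ i))
      = L.countP (fun x => decide (x < k) && decide (x ≤ i)) := by
    intro i hi
    apply List.countP_congr
    intro x _; simp; omega
  have hgt_n : L.countP (fun x => decide (k < x) && decide (x ≤ n))
      = L.countP (fun x => decide (k < x)) := by
    apply List.countP_congr
    intro x hx
    have := hmemL x hx
    simp; omega
  have bridge1 : Multiset.card ((↑L : Multiset ℕ).filter (· < k))
      = L.countP (fun x => decide (x < k)) := by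
    simp [List.countP_eq_length_filter]
  have bridge1f : ∀ i : ℕ, Multiset.card (((↑L : Multiset ℕ).filter (· < k)).filter (· ≤ i))
      = L.countP (fun x => decide (x < k) && decide (x ≤ i)) := by
    intro i
    rw [Multiset.filter_filter]
    simp [List.countP_eq_length_filter]
    congr 1
    apply List.filter_congr
    intro x _
    simp [Bool.and_comm]
  have bridge2 : Multiset.card (((↑L : Multiset ℕ).filter (fun x => k < x)).map (fun x => x - k))
      = L.countP (fun x => decide (k < x)) := by
    simp [List.countP_eq_length_filter]
  have bridge2f : ∀ i : ℕ,
      Multiset.card (((((↑L : Multiset ℕ).filter (fun x => k < x)).map (fun x => x - k))).filter (· ≤ i))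
        = L.countP (fun x => decide (k < x) && decide (x ≤ k + i)) := by
    intro i
    rw [Multiset.filter_map]
    simp only [Multiset.filter_filter, Multiset.card_map, Function.comp]
    simp [List.countP_eq_length_filter]
    congr 1
    apply List.filter_congr
    intro x _
    simp [Bool.and_comm, Nat.add_comm]
  constructor
  · rintro ⟨hPk, hCk⟩
    have hnok : L.countP (fun x => decide (x = k)) = 0 := by
      rcases Nat.lt_or_ge (n - m) k with hlt | hge
      · have h1 := hPk (k - 1) (by omega) (by omega)
        have hnk : ¬ (k ≤ k - 1) := by omega
        rw [if_neg hnk] at h1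
        omega
      · omega
    have hgt_card : L.countP (fun x => decide (k < x)) = n - k := by
      have h1 := hsplit_hi n hk2
      omega
    refine ⟨hnok, ⟨?_, ?_, ?_⟩, ⟨?_, ?_, ?_⟩⟩
    · rw [bridge1]; omega
    · intro x hx
      simp only [Multiset.mem_filter, Multiset.mem_coe] at hx
      have h1 := hmemL x hx.1
      have h2 := hx.2
      omega
    · intro i hi1 hi2
      rw [bridge1f i, ← hlow i (by omega)]
      have h1 := hPk i (by omega) (by omega)
      have hnk : ¬ (k ≤ i) := by omega
      rw [if_neg hnk] at h1
      omega
    · rw [bridge2, hgt_card]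
    · intro x hx
      simp only [Multiset.mem_map, Multiset.mem_filter, Multiset.mem_coe] at hx
      obtain ⟨y, ⟨hy, hyk⟩, rfl⟩ := hx
      have := hmemL y hy
      omega
    · intro i hi1 hi2
      rw [bridge2f i]
      have h1 := hPk (k + i) (by omega) (by omega)
      have hki : k ≤ k + i := by omega
      rw [if_pos hki] at h1
      have h2 := hsplit_hi (k + i) hki
      omega
  · rintro ⟨hnok, ⟨hc1, _, hp1⟩, ⟨hc2, _, hp2⟩⟩
    rw [bridge1] at hc1
    have hCk : L.countP (fun x => decide (x ≤ k)) = m + k - n := by omega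
    refine ⟨?_, hCk⟩
    intro i hi1 hi2
    rcases Nat.lt_or_ge i k with hik | hik
    · have hp := hp1 i (by omega) (by omega)
      rw [bridge1f i, ← hlow i hik] at hp
      have hnk : ¬ (k ≤ i) := by omega
      rw [if_neg hnk]
      omega
    · have hsp := hsplit_hi i hik
      rw [if_pos hik]
      rcases Nat.eq_or_lt_of_le hik with heq | hlt
      · rw [← heq]; omega
      · have hp := hp2 (i - k) (by omega) (by omega)
        rw [bridge2f (i - k)] at hp
        have hki : k + (i - k) = i := by omega
        rw [hki] at hp
        omega

/-- Parking function shuffle: for `k ≥ n - m + 1` (here `m + 1` cars in total),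
the set of feasible first preferences equals `[k]` iff no remaining entry
equals `k`, the subsequence of entries `< k` is a parking function in
`PF(m - n + k, k - 1)` (in particular there are exactly `m + 1 - n + k - 1` such
entries), and the subsequence of entries `> k`, shifted down by `k`, is a
classical parking function in `PF(n - k, n - k)`. -/
theorem shuffle_characterization (m n k : ℕ) (hmn : m + 1 ≤ n)
    (hk1 : n - m ≤ k) (hk2 : k ≤ n) (ρ : Fin m → ℕ)
    (hval : ∀ i, 1 ≤ ρ i ∧ ρ i ≤ n) :
    (∀ j, (1 ≤ j ∧ j ≤ k) ↔ IsPF (m + 1) n (Fin.cons j ρ)) ↔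
      ((∀ i, ρ i ≠ k) ∧
        IsPFM (m + 1 + k - n - 1) (k - 1)
          ((List.ofFn ρ : Multiset ℕ).filter (· < k)) ∧
        IsPFM (n - k) (n - k)
          (((List.ofFn ρ : Multiset ℕ).filter (fun x => k < x)).map (fun x => x - k))) := by
  classical
  have hk0 : 1 ≤ k := by omega
  -- Step 1: reduce LHS to the countP condition
  have key : (∀ j, (1 ≤ j ∧ j ≤ k) ↔ IsPF (m + 1) n (Fin.cons j ρ)) ↔
      ((∀ i, i ≤ n → n - m ≤ i →
          m + 1 + i - n ≤ (List.ofFn ρ).countP (fun x => decide (x ≤ i))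
            + (if k ≤ i then 1 else 0))
        ∧ (List.ofFn ρ).countP (fun x => decide (x ≤ k)) = m + k - n) := by
    constructor
    · intro hL
      have hPk := ((isPF_cons_iff m n hmn ρ hval k).mp ((hL k).mp ⟨hk0, le_refl k⟩)).2
      refine ⟨hPk, ?_⟩
      have hge := hPk k hk2 hk1
      rw [if_pos (le_refl k)] at hge
      rcases Nat.lt_or_ge k n with hkn | hkn
      · by_contra hne
        have hgt : m + k - n + 1 ≤ (List.ofFn ρ).countP (fun x => decide (x ≤ k)) := by omega
        have hpf : IsPF (m + 1) n (Fin.cons (k+1) ρ) := by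
          rw [isPF_cons_iff m n hmn ρ hval]
          refine ⟨⟨by omega, by omega⟩, ?_⟩
          intro i hi1 hi2
          have h := hPk i hi1 hi2
          rcases Nat.lt_or_ge i (k+1) with hik | hik
          · have hik1 : ¬ (k + 1 ≤ i) := by omega
            rw [if_neg hik1]
            rcases Nat.lt_or_ge i k with hik' | hik'
            · rw [if_neg (by omega)] at h; omega
            · have hieq : i = k := by omega
              rw [hieq]
              omega
          · rw [if_pos hik]
            rw [if_pos (by omega : k ≤ i)] at h
            omega
        have := (hL (k+1)).mpr hpf
        omega
      · have hkeq : k = n := by omega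
        subst hkeq
        have h2 : (List.ofFn ρ).countP (fun x => decide (x ≤ k)) = (List.ofFn ρ).length :=
          List.countP_eq_length.mpr (by
            intro x hx
            rw [List.mem_ofFn] at hx
            obtain ⟨i, rfl⟩ := hx
            simpa using (hval i).2)
        rw [List.length_ofFn] at h2
        omega
    · rintro ⟨hPk, hCk⟩
      intro j
      constructor
      · rintro ⟨hj1, hjk⟩
        rw [isPF_cons_iff m n hmn ρ hval]
        refine ⟨⟨hj1, by omega⟩, ?_⟩
        intro i hi1 hi2
        have h := hPk i hi1 hi2
        by_cases hji : j ≤ i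
        · rw [if_pos hji]
          by_cases hki : k ≤ i
          · rw [if_pos hki] at h; omega
          · rw [if_neg hki] at h; omega
        · rw [if_neg hji]
          rw [if_neg (by omega : ¬ (k ≤ i))] at h
          omega
      · intro hpf
        rw [isPF_cons_iff m n hmn ρ hval] at hpf
        obtain ⟨⟨hj1, hjn⟩, hP⟩ := hpf
        refine ⟨hj1, ?_⟩
        by_contra hjk
        have h := hP k hk2 hk1
        rw [if_neg (by omega : ¬ (j ≤ k))] at h
        omega
  rw [key]
  have hmemL : ∀ x ∈ List.ofFn ρ, 1 ≤ x ∧ x ≤ n := by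
    intro x hx
    rw [List.mem_ofFn] at hx
    obtain ⟨i, rfl⟩ := hx
    exact hval i
  rw [step2 m n k hmn hk1 hk2 (List.ofFn ρ) (by simp) hmemL]
  have hnok_iff : (List.ofFn ρ).countP (fun x => decide (x = k)) = 0 ↔ (∀ i, ρ i ≠ k) := by
    rw [List.countP_eq_zero]
    constructor
    · intro h i hik
      exact absurd (by simp [hik]) (h (ρ i) (List.mem_ofFn.mpr ⟨i, rfl⟩))
    · intro h x hx
      simp only [decide_eq_true_eq]
      rw [List.mem_ofFn] at hx
      obtain ⟨i, rfl⟩ := hx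
      exact h i
  rw [hnok_iff]
end

section
/- For any positive integer s and nonnegative integer m, Σ_{x₁+⋯+x_s=m, x_i ≥ 0} m!/(x₁!⋯x_s!) · (x₁+1)^{x₁−1} ⋯ (x_s+1)^{x_s−1} = s(m+s)^{m−1}. -/
open Polynomial Finset

noncomputable def Ap : ℕ → Polynomial ℚ
  | 0 => 1
  | (n+1) => X * (X + C ((n : ℚ)+1))^n

lemma Ap_succ (n : ℕ) : Ap (n+1) = X * (X + C ((n : ℚ)+1))^n := rfl

lemma Ap_derivative (n : ℕ) :
    derivative (Ap (n+1)) = ((n : ℚ)+1) • ((Ap n).comp (X + 1)) := by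
  cases n with
  | zero => simp [Ap]
  | succ m =>
    rw [Ap_succ, Ap_succ, Nat.cast_succ]
    rw [derivative_mul, derivative_X, derivative_X_add_C_pow]
    rw [mul_comp, X_comp, pow_comp, add_comp, X_comp, C_comp]
    rw [smul_eq_C_mul]
    have h1 : (X + C ((m:ℚ)+1+1)) ^ (m + 1) = (X + C ((m:ℚ)+1+1)) * (X + C ((m:ℚ)+1+1)) ^ m := by
      ring
    have h2 : (X + 1 + C ((m:ℚ)+1)) = X + C ((m:ℚ)+1+1) := by
      simp only [map_add, map_one, map_natCast]; ring
    rw [h1, h2]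
    simp only [map_add, map_one, map_natCast, Nat.add_sub_cancel]
    push_cast
    ring

lemma Ap_eval_zero_succ (k : ℕ) : (Ap (k+1)).eval 0 = 0 := by simp [Ap_succ]

lemma Ap_binomial (n : ℕ) (y : ℚ) :
    ∑ k ∈ range (n+1), (n.choose k : ℚ) • (Ap k * C ((Ap (n-k)).eval y)) =
      (Ap n).comp (X + C y) := by
  induction n generalizing y with
  | zero => simp [Ap]
  | succ n ih =>
    set L := ∑ k ∈ range (n+1+1), ((n+1).choose k : ℚ) • (Ap k * C ((Ap (n+1-k)).eval y)) with hL
    set R := (Ap (n+1)).comp (X + C y) with hR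
    have hd : derivative L = derivative R := by
      have dR : derivative R = ((n : ℚ)+1) • (Ap n).comp (X + 1 + C y) := by
        rw [hR, derivative_comp, Ap_derivative, smul_comp, comp_assoc]
        simp [add_comp, add_right_comm]
      have dL : derivative L =
          ((n : ℚ)+1) • ∑ j ∈ range (n+1),
            (n.choose j : ℚ) • ((Ap j).comp (X + 1) * C ((Ap (n-j)).eval y)) := by
        rw [hL, map_sum]
        have : ∀ k, derivative (((n+1).choose k : ℚ) • (Ap k * C ((Ap (n+1-k)).eval y))) =
            ((n+1).choose k : ℚ) • (derivative (Ap k) * C ((Ap (n+1-k)).eval y)) := by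
          intro k
          rw [derivative_smul, derivative_mul, derivative_C, mul_zero, add_zero]
        simp_rw [this]
        rw [Finset.sum_range_succ']
        simp only [Nat.choose_zero_right, Nat.cast_one, one_smul]
        show (∑ j ∈ range (n+1), ((n+1).choose (j+1) : ℚ) •
            (derivative (Ap (j+1)) * C ((Ap (n+1-(j+1))).eval y))) + derivative (Ap 0) * _ = _
        have dAp0 : derivative (Ap 0) = 0 := by simp [Ap]
        rw [dAp0, zero_mul, add_zero, Finset.smul_sum]
        refine Finset.sum_congr rfl fun j hj => ?_
        have hc : (((n+1).choose (j+1) : ℕ) : ℚ) * ((j : ℚ)+1) =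
            ((n : ℚ)+1) * ((n.choose j : ℕ) : ℚ) := by
          have h : (n+1) * n.choose j = (n+1).choose (j+1) * (j+1) := by
            simpa [Nat.succ_eq_add_one, Nat.mul_comm, Nat.mul_add, Nat.add_mul] using
              Nat.add_one_mul_choose_eq n j
          have h2 := congrArg (Nat.cast : ℕ → ℚ) h
          push_cast at h2
          linarith
        rw [Nat.succ_sub_succ, Ap_derivative, smul_mul_assoc, smul_smul, hc, ← smul_smul]
      rw [dL, dR]
      congr 1
      have := congrArg (fun p => p.comp (X + 1)) (ih y)
      simp only [Polynomial.sum_comp, smul_comp, mul_comp, C_comp, comp_assoc, add_comp, X_comp,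
        one_comp] at this
      exact this
    have h0 : L.eval 0 = R.eval 0 := by
      rw [hL, hR, eval_comp]
      simp only [eval_add, eval_X, eval_C, zero_add]
      rw [Finset.sum_range_succ']
      have : ∀ j ∈ range (n+1), (((n+1).choose (j+1) : ℚ) •
          (Ap (j+1) * C ((Ap (n+1-(j+1))).eval y))).eval 0 = 0 := by
        intro j _
        rw [eval_smul, eval_mul, Ap_eval_zero_succ, zero_mul, smul_zero]
      rw [eval_add, eval_finset_sum, Finset.sum_eq_zero this, zero_add]
      simp [Ap]
    have hsub : derivative (L - R) = 0 := by rw [derivative_sub, hd, sub_self]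
    have := eq_C_of_derivative_eq_zero hsub
    rw [coeff_zero_eq_eval_zero, eval_sub, h0, sub_self, map_zero] at this
    have : L - R = 0 := this
    exact sub_eq_zero.mp this

lemma Ap_scalar (n : ℕ) (y : ℚ) :
    ∑ k ∈ range (n+1), (n.choose k : ℚ) * (Ap k).eval 1 * (Ap (n-k)).eval y =
      (Ap n).eval (1 + y) := by
  have := congrArg (eval 1) (Ap_binomial n y)
  simpa [eval_finset_sum, eval_comp, mul_assoc] using this

lemma multinomial_fin_cons (s : ℕ) (a : ℕ) (x : Fin s → ℕ) :
    Nat.multinomial Finset.univ (Fin.cons a x) =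
      (a + ∑ i, x i).choose a * Nat.multinomial Finset.univ x := by
  have h1 : ∑ i ∈ Finset.univ.map ⟨Fin.succ, Fin.succ_injective s⟩,
      (Fin.cons a x : Fin (s+1) → ℕ) i = ∑ i, x i := by
    rw [Finset.sum_map]; simp
  have h2 : Nat.multinomial (Finset.univ.map ⟨Fin.succ, Fin.succ_injective s⟩)
      (Fin.cons a x : Fin (s+1) → ℕ) = Nat.multinomial Finset.univ x := by
    unfold Nat.multinomial
    rw [Finset.sum_map, Finset.prod_map]
    simp
  rw [Fin.univ_succ, Nat.multinomial_cons, Fin.cons_zero, h1, h2]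

lemma sum_antidiagonalTuple_succ {M : Type*} [AddCommMonoid M] {s m : ℕ}
    (f : (Fin (s+1) → ℕ) → M) :
    ∑ x ∈ Finset.Nat.antidiagonalTuple (s+1) m, f x =
      ∑ p ∈ Finset.HasAntidiagonal.antidiagonal m, ∑ x ∈ Finset.Nat.antidiagonalTuple s p.2,
        f (Fin.cons p.1 x) := by
  have hset : Finset.Nat.antidiagonalTuple (s+1) m =
      (Finset.HasAntidiagonal.antidiagonal m).biUnion fun p =>
        (Finset.Nat.antidiagonalTuple s p.2).map
          ⟨Fin.cons p.1, Fin.cons_right_injective (α := fun _ => ℕ) p.1⟩ := by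
    ext y
    simp only [Finset.Nat.mem_antidiagonalTuple, Finset.mem_biUnion, Finset.mem_map,
      Function.Embedding.coeFn_mk, Finset.HasAntidiagonal.mem_antidiagonal, Prod.exists]
    constructor
    · rintro rfl
      exact ⟨y 0, ∑ i, y (Fin.succ i), (Fin.sum_univ_succ y).symm,
        Fin.tail y, rfl, Fin.cons_self_tail y⟩
    · rintro ⟨a, b, hab, x, hx, rfl⟩
      rw [Fin.sum_cons, hx]
      exact hab
  rw [hset, Finset.sum_biUnion]
  · exact Finset.sum_congr rfl fun p _ => Finset.sum_map _ _ _
  · intro p hp q hq hpq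
    simp only [Function.onFun]
    rw [Finset.disjoint_left]
    rintro z hz1 hz2
    simp only [Finset.mem_map, Function.Embedding.coeFn_mk,
      Finset.Nat.mem_antidiagonalTuple] at hz1 hz2
    obtain ⟨x, hx, rfl⟩ := hz1
    obtain ⟨x', hx', he⟩ := hz2
    apply hpq
    have h1 : q.1 = p.1 := by simpa using congrFun he 0
    have h2 : x' = x := by
      have := congrArg Fin.tail he
      simpa [Fin.tail_cons] using this
    have h3 : q.2 = p.2 := by rw [← hx, ← hx', h2]
    exact Prod.ext h1.symm h3.symm

lemma main_sum (s m : ℕ) :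
    ∑ x ∈ Finset.Nat.antidiagonalTuple (s+1) m,
        (Nat.multinomial Finset.univ x : ℚ) * ∏ i, (Ap (x i)).eval 1 =
      (Ap m).eval ((s : ℚ) + 1) := by
  induction s generalizing m with
  | zero =>
    rw [Finset.Nat.antidiagonalTuple_one, Finset.sum_singleton]
    simp [Fin.prod_univ_succ]
  | succ s ih =>
    rw [sum_antidiagonalTuple_succ]
    have hinner : ∀ p ∈ Finset.HasAntidiagonal.antidiagonal m,
        ∑ x ∈ Finset.Nat.antidiagonalTuple (s+1) p.2,
          (Nat.multinomial Finset.univ (Fin.cons p.1 x) : ℚ) *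
            ∏ i, (Ap ((Fin.cons p.1 x : Fin (s+1+1) → ℕ) i)).eval 1 =
        (m.choose p.1 : ℚ) * (Ap p.1).eval 1 * (Ap p.2).eval ((s : ℚ) + 1) := by
      intro p hp
      rw [Finset.HasAntidiagonal.mem_antidiagonal] at hp
      have : ∀ x ∈ Finset.Nat.antidiagonalTuple (s+1) p.2,
          (Nat.multinomial Finset.univ (Fin.cons p.1 x) : ℚ) *
            ∏ i, (Ap ((Fin.cons p.1 x : Fin (s+1+1) → ℕ) i)).eval 1 =
          (m.choose p.1 : ℚ) * (Ap p.1).eval 1 *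
            ((Nat.multinomial Finset.univ x : ℚ) * ∏ i, (Ap (x i)).eval 1) := by
        intro x hx
        rw [Finset.Nat.mem_antidiagonalTuple] at hx
        rw [multinomial_fin_cons, hx, hp, Fin.prod_univ_succ]
        simp only [Fin.cons_zero, Fin.cons_succ]
        push_cast
        ring
      rw [Finset.sum_congr rfl this, ← Finset.mul_sum, ih]
    rw [Finset.sum_congr rfl hinner, Finset.Nat.sum_antidiagonal_eq_sum_range_succ_mk,
      Ap_scalar]
    push_cast
    ring_nf

/-- For a positive integer `s` and nonnegative integer `m`,
`Σ_{x₁+⋯+x_s=m} m!/(x₁!⋯x_s!) · (x₁+1)^(x₁-1) ⋯ (x_s+1)^(x_s-1) = s (m+s)^(m-1)`,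
with negative exponents interpreted as integer powers in `ℚ`. -/
theorem forest_count_identity (s m : ℕ) (hs : 1 ≤ s) :
    ∑ x ∈ Finset.Nat.antidiagonalTuple s m,
        (Nat.multinomial Finset.univ x : ℚ) *
          ∏ i, ((x i : ℚ) + 1) ^ ((x i : ℤ) - 1) =
      (s : ℚ) * ((m : ℚ) + s) ^ ((m : ℤ) - 1) := by
  obtain ⟨t, rfl⟩ : ∃ t, s = t + 1 := ⟨s - 1, (Nat.succ_pred_eq_of_pos hs).symm⟩
  have hfac : ∀ x : Fin (t+1) → ℕ, ∏ i, ((x i : ℚ) + 1) ^ ((x i : ℤ) - 1) =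
      ∏ i, (Ap (x i)).eval 1 := by
    intro x
    refine Finset.prod_congr rfl fun i _ => ?_
    cases h : x i with
    | zero => simp [Ap]
    | succ j =>
      rw [Ap_succ]
      push_cast
      rw [show ((j:ℤ)+1) - 1 = (j:ℤ) by ring, zpow_natCast]
      simp only [eval_mul, eval_pow, eval_add, eval_X, eval_C, eval_one, one_mul]
      ring_nf
  have hmain : ∑ x ∈ Finset.Nat.antidiagonalTuple (t+1) m,
      (Nat.multinomial Finset.univ x : ℚ) * ∏ i, ((x i : ℚ) + 1) ^ ((x i : ℤ) - 1) =
      (Ap m).eval ((t : ℚ) + 1) := by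
    rw [← main_sum]
    exact Finset.sum_congr rfl fun x _ => by rw [hfac]
  rw [hmain]
  have hne : ((t : ℚ) + 1) ≠ 0 := by positivity
  cases m with
  | zero =>
    show (Ap 0).eval _ = _
    simp only [Ap, eval_one, Nat.cast_zero, zero_add, Nat.cast_add, Nat.cast_one]
    rw [show ((0:ℤ) - 1) = -1 by ring, zpow_neg_one]
    rw [mul_inv_cancel₀ hne]
  | succ j =>
    rw [Ap_succ]
    push_cast
    rw [show ((j:ℤ)+1) - 1 = (j:ℤ) by ring, zpow_natCast]
    simp only [eval_mul, eval_pow, eval_add, eval_X, eval_C]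
    ring_nf
end

section
/- For n ≥ 0 and x, y > 0, Σ_{s=0}^{n} C(n,s) (x+s)^{s−1} (y+n−s)^{n−s−1} = (x^{−1} + y^{−1})(x+y+n)^{n−1}. -/
open Finset Polynomial


lemma fd_pow_zero : ∀ n m : ℕ, m < n → (fwdDiff (1:ℝ))^[n] (fun t : ℝ => t ^ m) = 0 := by
  intro n
  induction n with
  | zero => intro m hm; omega
  | succ n ih =>
    intro m hm
    have key : fwdDiff (1:ℝ) (fun t : ℝ => t ^ m)
        = ∑ j ∈ range m, (m.choose j : ℝ) • (fun t : ℝ => t ^ j) := by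
      funext t
      simp only [fwdDiff, Finset.sum_apply, Pi.smul_apply, smul_eq_mul]
      rw [add_pow]
      rw [Finset.sum_range_succ]
      simp [mul_comm]
    rw [Function.iterate_succ_apply, key, fwdDiff_iter_finset_sum]
    refine Finset.sum_eq_zero fun j hj => ?_
    have hj2 := Finset.mem_range.mp hj
    rw [fwdDiff_iter_const_smul, ih j (by omega)]
    simp

lemma alt_sum_zero (n m : ℕ) (h : m < n) (x : ℝ) :
    ∑ s ∈ range (n+1), (-1:ℝ)^(n-s) * (n.choose s) * (x + s)^m = 0 := by
  have h1 := fwdDiff_iter_eq_sum_shift (1:ℝ) (fun t : ℝ => t ^ m) n x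
  rw [fd_pow_zero n m h] at h1
  simp only [Pi.zero_apply, nsmul_eq_mul, mul_one, zsmul_eq_mul] at h1
  rw [eq_comm] at h1
  rw [← h1]
  apply Finset.sum_congr rfl
  intro s hs
  push_cast
  ring

lemma abel_poly (x : ℝ) (hx : 0 < x) : ∀ (n : ℕ) (t : ℝ),
    ∑ s ∈ range (n+1),
        C ((n.choose s : ℝ) * (x + s) ^ ((s:ℤ) - 1)) * (X + C (t + n - s)) ^ (n - s)
      = C x⁻¹ * (X + C (t + x + n)) ^ n := by
  intro n
  induction n with
  | zero =>
    intro t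
    simp [zpow_neg, zpow_one]
  | succ n ih =>
    intro t
    push_cast
    set L : ℝ[X] := ∑ s ∈ range (n+1+1),
        C (((n+1).choose s : ℝ) * (x + s) ^ ((s:ℤ) - 1)) * (X + C (t + ((n:ℝ)+1) - s)) ^ (n+1 - s)
      with hL
    set R : ℝ[X] := C x⁻¹ * (X + C (t + x + ((n:ℝ)+1))) ^ (n+1) with hR
    have hderiv : derivative (L - R) = 0 := by
      have hdL : derivative L
          = C ((n:ℝ)+1) * (∑ s ∈ range (n+1),
              C ((n.choose s : ℝ) * (x + s) ^ ((s:ℤ) - 1)) * (X + C ((t+1) + n - s)) ^ (n - s)) := by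
        rw [hL, derivative_sum, Finset.sum_range_succ, Finset.mul_sum]
        rw [show (n+1) - (n+1) = 0 from by omega]
        simp only [pow_zero, mul_one, derivative_C, add_zero]
        apply Finset.sum_congr rfl
        intro s hs
        have hs' := Finset.mem_range.mp hs
        rw [derivative_mul, derivative_C, zero_mul, zero_add, derivative_pow,
          derivative_add, derivative_X, derivative_C, add_zero, mul_one]
        have e2 : (n + 1 - s - 1 : ℕ) = n - s := by omega
        have e1 : (n + 1 - s : ℕ) = (n - s) + 1 := by omega
        have e3 : t + ((n:ℝ)+1) - (s:ℝ) = (t+1) + n - s := by ring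
        rw [e2, e1, e3, ← mul_assoc, ← mul_assoc, ← C_mul, ← C_mul]
        refine congrArg₂ (· * ·) (congrArg C ?_) rfl
        have hnat : (n+1).choose s * (n - s + 1) = (n+1) * n.choose s := by
          have h1 := Nat.add_one_mul_choose_eq n s
          have h2 := Nat.choose_succ_right_eq (n+1) s
          have e : n - s + 1 = n + 1 - s := by omega
          rw [e, ← h2]
          exact h1.symm
        have e4 : (((n+1).choose s : ℝ)) * ((n - s + 1 : ℕ) : ℝ)
            = ((n:ℝ)+1) * (n.choose s) := by exact_mod_cast hnat
        linear_combination ((x + (s:ℝ)) ^ ((s:ℤ) - 1)) * e4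
      have hdR : derivative R
          = C ((n:ℝ)+1) * (C x⁻¹ * (X + C ((t+1) + x + n)) ^ n) := by
        rw [hR, derivative_mul, derivative_C, zero_mul, zero_add, derivative_pow,
          derivative_add, derivative_X, derivative_C, add_zero, mul_one]
        rw [show t + x + ((n:ℝ)+1) = (t+1) + x + n from by ring,
          show (n + 1 - 1 : ℕ) = n from by omega]
        push_cast
        ring
      rw [derivative_sub, hdL, hdR, ih (t+1), sub_self]
    have hconst := Polynomial.eq_C_of_derivative_eq_zero hderiv
    have heval : (L - R).eval (-(t + x + ((n:ℝ)+1))) = 0 := by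
      rw [eval_sub]
      have hRe : R.eval (-(t + x + ((n:ℝ)+1))) = 0 := by
        rw [hR]
        simp only [eval_mul, eval_pow, eval_add, eval_X, eval_C]
        rw [show -(t + x + ((n:ℝ)+1)) + (t + x + ((n:ℝ)+1)) = 0 from by ring]
        simp
      rw [hRe, sub_zero, hL, eval_finset_sum]
      have key : ∀ s ∈ range (n+1+1),
          (C (((n+1).choose s : ℝ) * (x + s) ^ ((s:ℤ) - 1))
              * (X + C (t + ((n:ℝ)+1) - s)) ^ (n+1 - s)).eval (-(t + x + ((n:ℝ)+1)))
          = (-1:ℝ)^(n+1-s) * ((n+1).choose s) * (x + s)^n := by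
        intro s hs
        have hs' : s ≤ n + 1 := by have := Finset.mem_range.mp hs; omega
        have hxs : (0:ℝ) < x + s := by positivity
        simp only [eval_mul, eval_pow, eval_add, eval_X, eval_C]
        rw [show -(t + x + ((n:ℝ)+1)) + (t + ((n:ℝ)+1) - s) = -(x + s) from by ring, neg_pow]
        have e2 : (x + s) ^ ((s:ℤ) - 1) * (x + s) ^ (n + 1 - s : ℕ) = (x + s) ^ n := by
          rw [← zpow_natCast (x + (s:ℝ)) (n + 1 - s), ← zpow_add₀ (ne_of_gt hxs)]
          rw [show (s:ℤ) - 1 + ((n + 1 - s : ℕ) : ℤ) = (n : ℤ) from by omega, zpow_natCast]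
        calc ((n+1).choose s : ℝ) * (x + s) ^ ((s:ℤ) - 1) *
              ((-1:ℝ)^(n+1-s) * (x + s) ^ (n+1-s : ℕ))
            = (-1:ℝ)^(n+1-s) * ((n+1).choose s) *
              ((x + s) ^ ((s:ℤ) - 1) * (x + s) ^ (n + 1 - s : ℕ)) := by ring
          _ = (-1:ℝ)^(n+1-s) * ((n+1).choose s) * (x + s)^n := by rw [e2]
      rw [Finset.sum_congr rfl key]
      exact alt_sum_zero (n+1) n (by omega) x
    have hz : L - R = 0 := by
      rw [hconst] at heval ⊢
      rw [eval_C] at heval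
      rw [heval, map_zero]
    exact sub_eq_zero.mp hz

lemma abel_m10 (n : ℕ) (x : ℝ) (hx : 0 < x) (y : ℝ) :
    ∑ s ∈ range (n+1), (n.choose s : ℝ) * (x + s) ^ ((s:ℤ) - 1) * (y + n - s) ^ (n - s)
      = x⁻¹ * (x + y + n) ^ n := by
  have h := congrArg (Polynomial.eval y) (abel_poly x hx n 0)
  simp only [eval_finset_sum, eval_mul, eval_pow, eval_add, eval_X, eval_C, zero_add] at h
  rw [show y + (x + (n:ℝ)) = x + y + n from by ring] at h
  rw [← h]
  exact Finset.sum_congr rfl fun s hs => by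
    rw [show y + ((n:ℝ) - s) = y + n - s from by ring]

lemma abel_0m1 (n : ℕ) (x y : ℝ) (hy : 0 < y) :
    ∑ s ∈ range (n+1), (n.choose s : ℝ) * (x + s) ^ s * (y + n - s) ^ ((n:ℤ) - s - 1)
      = y⁻¹ * (x + y + n) ^ n := by
  have h := abel_m10 n y hy x
  rw [← Finset.sum_range_reflect] at h
  rw [show y + x + (n:ℝ) = x + y + n from by ring] at h
  rw [← h]
  refine Finset.sum_congr rfl fun s hs => ?_
  have hs' : s ≤ n := by have := Finset.mem_range.mp hs; omega
  have c1 : n.choose (n + 1 - 1 - s) = n.choose s := by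
    rw [show n + 1 - 1 - s = n - s from by omega, Nat.choose_symm hs']
  have c2 : ((n + 1 - 1 - s : ℕ) : ℝ) = (n:ℝ) - s := by
    rw [show n + 1 - 1 - s = n - s from by omega]
    push_cast [Nat.cast_sub hs']
    ring
  have c3 : ((n + 1 - 1 - s : ℕ) : ℤ) = (n:ℤ) - s := by omega
  have c4 : n - (n + 1 - 1 - s) = s := by omega
  rw [c1, c2, c3, c4]
  rw [show y + ((n:ℝ) - s) = y + n - s from by ring,
    show x + (n:ℝ) - ((n:ℝ) - s) = x + s from by ring]
  ring

/-- Abel's binomial theorem, case `A_n(x, y; -1, -1)`: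
`Σ_{s=0}^{n} C(n,s) (x+s)^(s-1) (y+n-s)^(n-s-1) = (x⁻¹ + y⁻¹)(x+y+n)^(n-1)`. -/
theorem abel_neg_one_neg_one (n : ℕ) (x y : ℝ) (hx : 0 < x) (hy : 0 < y) :
    ∑ s ∈ Finset.range (n + 1),
        (n.choose s : ℝ) * (x + s) ^ ((s : ℤ) - 1) * (y + n - s) ^ ((n : ℤ) - s - 1) =
      (x⁻¹ + y⁻¹) * (x + y + n) ^ ((n : ℤ) - 1) := by
  have hxy : (0:ℝ) < x + y + n := by positivity
  apply mul_left_cancel₀ (ne_of_gt hxy)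
  rw [Finset.mul_sum]
  have lhs_eq : ∀ s ∈ range (n+1),
      (x + y + (n:ℝ)) * ((n.choose s : ℝ) * (x + s) ^ ((s:ℤ) - 1) * (y + n - s) ^ ((n:ℤ) - s - 1))
        = (n.choose s : ℝ) * (x + s) ^ s * (y + n - s) ^ ((n:ℤ) - s - 1)
          + (n.choose s : ℝ) * (x + s) ^ ((s:ℤ) - 1) * (y + n - s) ^ (n - s) := by
    intro s hs
    have hs' : s ≤ n := by have := Finset.mem_range.mp hs; omega
    have hsn : (s:ℝ) ≤ n := by exact_mod_cast hs'
    have hxs : (0:ℝ) < x + s := by positivity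
    have hys : (0:ℝ) < y + n - s := by linarith
    have h1 : (x + s) * (x + s) ^ ((s:ℤ) - 1) = (x + s) ^ (s:ℕ) := by
      have h := zpow_add_one₀ (ne_of_gt hxs) ((s:ℤ) - 1)
      rw [show (s:ℤ) - 1 + 1 = (s:ℤ) from by ring] at h
      rw [← zpow_natCast (x + (s:ℝ)) s, h]; ring
    have h2 : (y + n - s) * (y + n - s) ^ ((n:ℤ) - s - 1) = (y + n - s) ^ (n - s : ℕ) := by
      have h := zpow_add_one₀ (ne_of_gt hys) ((n:ℤ) - s - 1)
      rw [show (n:ℤ) - s - 1 + 1 = (n:ℤ) - s from by ring] at h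
      rw [← zpow_natCast (y + (n:ℝ) - s) (n - s),
        show ((n - s : ℕ) : ℤ) = (n:ℤ) - s from by omega, h]; ring
    rw [show x + y + (n:ℝ) = (x + s) + (y + n - s) from by ring, add_mul]
    congr 1
    · linear_combination ((n.choose s : ℝ) * (y + (n:ℝ) - s) ^ ((n:ℤ) - s - 1)) * h1
    · linear_combination ((n.choose s : ℝ) * (x + (s:ℝ)) ^ ((s:ℤ) - 1)) * h2
  rw [Finset.sum_congr rfl lhs_eq, Finset.sum_add_distrib, abel_0m1 n x y hy, abel_m10 n x hx y]
  have h3 : (x + y + (n:ℝ)) * (x + y + (n:ℝ)) ^ ((n:ℤ) - 1) = (x + y + n) ^ (n:ℕ) := by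
    have h := zpow_add_one₀ (ne_of_gt hxy) ((n:ℤ) - 1)
    rw [show (n:ℤ) - 1 + 1 = (n:ℤ) from by ring] at h
    rw [← zpow_natCast (x + y + (n:ℝ)) n, h]; ring
  linear_combination (-(x⁻¹ + y⁻¹)) * h3
end

section
/- For n ≥ 0 and x > 0, y ≥ 0, Σ_{s=0}^{n} C(n,s) (x+s)^{s−1} (y+n−s)^{n−s} = x^{−1}(x+y+n)^n. -/
open Finset

/-- Trinomial revision: `C(n,s)·C(n−s,j) = C(n,j)·C(n−j,s)` for `s + j ≤ n`. -/
lemma choose_trinomial (n s j : ℕ) (h : s + j ≤ n) :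
    n.choose s * (n - s).choose j = n.choose j * (n - j).choose s := by
  have hs : s ≤ n := by omega
  have hj : j ≤ n := by omega
  have hjs : j ≤ n - s := by omega
  have hsj : s ≤ n - j := by omega
  apply Nat.eq_of_mul_eq_mul_right
    (Nat.mul_pos (Nat.mul_pos s.factorial_pos j.factorial_pos) (n - s - j).factorial_pos)
  have e1 : (n - s).choose j * j.factorial * (n - s - j).factorial = (n - s).factorial :=
    Nat.choose_mul_factorial_mul_factorial hjs
  have e2 : n.choose s * s.factorial * (n - s).factorial = n.factorial :=
    Nat.choose_mul_factorial_mul_factorial hs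
  have e3 : (n - j).choose s * s.factorial * (n - j - s).factorial = (n - j).factorial :=
    Nat.choose_mul_factorial_mul_factorial hsj
  have e4 : n.choose j * j.factorial * (n - j).factorial = n.factorial :=
    Nat.choose_mul_factorial_mul_factorial hj
  have hd : n - j - s = n - s - j := by omega
  calc n.choose s * (n - s).choose j * (s.factorial * j.factorial * (n - s - j).factorial)
      = (n.choose s * s.factorial) * ((n - s).choose j * j.factorial * (n - s - j).factorial) := by
        ring
    _ = n.choose s * s.factorial * (n - s).factorial := by rw [e1]
    _ = n.factorial := e2
    _ = n.choose j * j.factorial * (n - j).factorial := e4.symm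
    _ = (n.choose j * (n - j).choose s) * (s.factorial * j.factorial * (n - s - j).factorial) := by
        rw [← e3, hd]; ring

/-- Finite differences annihilate lower-degree powers. -/
lemma finDiff : ∀ m : ℕ, ∀ j, j < m → ∀ x : ℝ,
    ∑ s ∈ range (m + 1), (-1 : ℝ) ^ s * (m.choose s) * (x + s) ^ j = 0 := by
  intro m
  induction m with
  | zero => intro j hj; omega
  | succ m ih =>
    intro j hj x
    rw [Finset.sum_range_succ']
    have key : ∀ s ∈ range (m + 1),
        (-1 : ℝ) ^ (s + 1) * (((m + 1).choose (s + 1) : ℕ) : ℝ) * (x + ↑(s + 1)) ^ j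
          = (-1) ^ (s + 1) * (m.choose s) * (x + ↑(s + 1)) ^ j
            + (-1) ^ (s + 1) * (m.choose (s + 1)) * (x + ↑(s + 1)) ^ j := by
      intro s _
      rw [Nat.choose_succ_succ]
      push_cast
      ring
    rw [Finset.sum_congr rfl key, Finset.sum_add_distrib]
    have h2 : (∑ s ∈ range (m + 1),
          (-1 : ℝ) ^ (s + 1) * (m.choose (s + 1)) * (x + ↑(s + 1)) ^ j)
          + (-1 : ℝ) ^ (0 : ℕ) * (((m + 1).choose 0 : ℕ) : ℝ) * (x + ((0 : ℕ) : ℝ)) ^ j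
          = ∑ s ∈ range (m + 1), (-1 : ℝ) ^ s * (m.choose s) * (x + s) ^ j := by
      have h3 := Finset.sum_range_succ' (fun s => (-1 : ℝ) ^ s * (m.choose s) * (x + s) ^ j) (m + 1)
      rw [Finset.sum_range_succ] at h3
      simp only [Nat.choose_succ_self, Nat.cast_zero, Nat.choose_zero_right,
        Nat.cast_one] at h3 ⊢
      rw [mul_zero, zero_mul, add_zero] at h3
      linarith [h3]
    rw [add_assoc, h2, ← Finset.sum_add_distrib]
    have expand : ∀ s : ℕ, (x + s + 1 : ℝ) ^ j
        = (x + s) ^ j + ∑ i ∈ range j, (x + s) ^ i * (j.choose i) := by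
      intro s
      rw [add_pow, Finset.sum_range_succ]
      simp only [one_pow, Nat.sub_self, pow_zero, Nat.choose_self, Nat.cast_one, mul_one]
      exact add_comm _ _
    have key2 : ∀ s ∈ range (m + 1),
        (-1 : ℝ) ^ (s + 1) * (m.choose s) * (x + ↑(s + 1)) ^ j
          + (-1 : ℝ) ^ s * (m.choose s) * (x + s) ^ j
        = ∑ i ∈ range j, -((j.choose i : ℝ) * ((-1 : ℝ) ^ s * (m.choose s) * (x + s) ^ i)) := by
      intro s _
      have hsub : ((x + s) ^ j - (x + s + 1) ^ j : ℝ)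
          = -∑ i ∈ range j, (x + s) ^ i * (j.choose i) := by
        rw [expand s]; ring
      have h5 : (-1 : ℝ) ^ (s + 1) * (m.choose s) * (x + ↑(s + 1)) ^ j
          + (-1 : ℝ) ^ s * (m.choose s) * (x + s) ^ j
          = (-1 : ℝ) ^ s * (m.choose s) * ((x + s) ^ j - (x + s + 1) ^ j) := by
        push_cast; ring
      rw [h5, hsub, mul_neg, Finset.mul_sum, ← Finset.sum_neg_distrib]
      exact Finset.sum_congr rfl fun i _ => by ring
    rw [Finset.sum_congr rfl key2, Finset.sum_comm]
    refine Finset.sum_eq_zero fun i hi => ?_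
    have hij : i < j := Finset.mem_range.mp hi
    rw [Finset.sum_neg_distrib, ← Finset.mul_sum, ih i (by omega) x, mul_zero, neg_zero]

/-- Abel's binomial theorem, case `A_n(x, y; -1, 0)`:
`Σ_{s=0}^{n} C(n,s) (x+s)^(s-1) (y+n-s)^(n-s) = x⁻¹ (x+y+n)^n`. -/
theorem abel_neg_one_zero (n : ℕ) (x y : ℝ) (hx : 0 < x) (hy : 0 ≤ y) :
    ∑ s ∈ Finset.range (n + 1),
        (n.choose s : ℝ) * (x + s) ^ ((s : ℤ) - 1) * (y + n - s) ^ (n - s) =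
      x⁻¹ * (x + y + n) ^ n := by
  have hxs : ∀ s : ℕ, (0 : ℝ) < x + s := fun s => by positivity
  have step1 : ∀ s ∈ range (n + 1),
      (n.choose s : ℝ) * (x + s) ^ ((s : ℤ) - 1) * (y + n - s) ^ (n - s)
      = ∑ j ∈ range (n + 1),
          (n.choose s : ℝ) * ((n - s).choose j) * (x + s) ^ s * (x + s)⁻¹
            * (x + y + n) ^ j * (-(x + s)) ^ (n - s - j) := by
    intro s hs
    have hsn : s ≤ n := by have := Finset.mem_range.mp hs; omega
    have hne : (x + s : ℝ) ≠ 0 := (hxs s).ne'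
    have hz : (x + s : ℝ) ^ ((s : ℤ) - 1) = (x + s) ^ s * (x + s)⁻¹ := by
      rw [zpow_sub_one₀ hne, zpow_natCast]
    have hrw : (y + n - s : ℝ) = (x + y + n) + (-(x + s)) := by ring
    have hbin : ((x + y + n) + (-(x + s))) ^ (n - s)
        = ∑ j ∈ range (n - s + 1),
            (x + y + n) ^ j * (-(x + s)) ^ (n - s - j) * ((n - s).choose j) :=
      add_pow _ _ _
    rw [hz, hrw, hbin, Finset.mul_sum]
    rw [← Finset.sum_subset (show range (n - s + 1) ⊆ range (n + 1) from by
        intro t ht; simp only [Finset.mem_range] at *; omega)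
      (fun j hj hj2 => by
        simp only [Finset.mem_range] at hj hj2
        have hlt : n - s < j := by omega
        rw [Nat.choose_eq_zero_of_lt hlt]
        push_cast
        ring)]
    refine Finset.sum_congr rfl fun j hj => ?_
    push_cast
    ring
  rw [Finset.sum_congr rfl step1, Finset.sum_comm, Finset.sum_range_succ]
  have vanish : ∀ j ∈ range n,
      (∑ s ∈ range (n + 1),
        (n.choose s : ℝ) * ((n - s).choose j) * (x + s) ^ s * (x + s)⁻¹
          * (x + y + n) ^ j * (-(x + s)) ^ (n - s - j)) = 0 := by
    intro j hj
    have hjn : j < n := Finset.mem_range.mp hj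
    have hm1 : 1 ≤ n - j := by omega
    rw [← Finset.sum_subset (show range (n - j + 1) ⊆ range (n + 1) from by
        intro t ht; simp only [Finset.mem_range] at *; omega)
      (fun s hs hs2 => by
        simp only [Finset.mem_range] at hs hs2
        have hlt : n - s < j := by omega
        rw [Nat.choose_eq_zero_of_lt hlt]
        push_cast
        ring)]
    have term : ∀ s ∈ range (n - j + 1),
        (n.choose s : ℝ) * ((n - s).choose j) * (x + s) ^ s * (x + s)⁻¹
          * (x + y + n) ^ j * (-(x + s)) ^ (n - s - j)
        = ((n.choose j : ℝ) * (x + y + n) ^ j * (-1) ^ (n - j))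
            * ((-1 : ℝ) ^ s * ((n - j).choose s) * (x + s) ^ (n - j - 1)) := by
      intro s hs
      have hsm : s ≤ n - j := by have := Finset.mem_range.mp hs; omega
      have hne : (x + s : ℝ) ≠ 0 := (hxs s).ne'
      have hcc : (n.choose s : ℝ) * ((n - s).choose j)
          = (n.choose j : ℝ) * ((n - j).choose s) := by
        rw [← Nat.cast_mul, ← Nat.cast_mul, choose_trinomial n s j (by omega)]
      have hexp : (-(x + s) : ℝ) ^ (n - s - j)
          = (-1) ^ (n - j - s) * (x + s) ^ (n - j - s) := by
        rw [show n - s - j = n - j - s from by omega, neg_pow]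
      have hsign : ((-1 : ℝ)) ^ (n - j - s) = (-1) ^ (n - j) * (-1) ^ s := by
        have h6 : ((-1 : ℝ)) ^ (n - j - s) * (-1) ^ s = (-1) ^ (n - j) := by
          rw [← pow_add, show n - j - s + s = n - j from by omega]
        calc ((-1 : ℝ)) ^ (n - j - s)
            = ((-1 : ℝ)) ^ (n - j - s) * ((-1) ^ s * (-1) ^ s) := by
              rw [← pow_add, ← two_mul, pow_mul]; norm_num
          _ = (-1) ^ (n - j) * (-1) ^ s := by rw [← mul_assoc, h6]
      have hpow : (x + s : ℝ) ^ s * (x + s)⁻¹ * (x + s) ^ (n - j - s)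
          = (x + s) ^ (n - j - 1) := by
        have h8 : (x + s : ℝ) ^ s * (x + s) ^ (n - j - s) = (x + s) ^ (n - j) := by
          rw [← pow_add, show s + (n - j - s) = n - j from by omega]
        have h7 : (x + s : ℝ) ^ (n - j) = (x + s) ^ (n - j - 1) * (x + s) := by
          rw [← pow_succ, show n - j - 1 + 1 = n - j from by omega]
        calc (x + s : ℝ) ^ s * (x + s)⁻¹ * (x + s) ^ (n - j - s)
            = ((x + s) ^ s * (x + s) ^ (n - j - s)) * (x + s)⁻¹ := by ring
          _ = (x + s) ^ (n - j) * (x + s)⁻¹ := by rw [h8]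
          _ = (x + s) ^ (n - j - 1) := by
              rw [h7, mul_assoc, mul_inv_cancel₀ hne, mul_one]
      calc (n.choose s : ℝ) * ((n - s).choose j) * (x + s) ^ s * (x + s)⁻¹
          * (x + y + n) ^ j * (-(x + s)) ^ (n - s - j)
          = ((n.choose s : ℝ) * ((n - s).choose j)) * (x + y + n) ^ j
            * ((-(x + s)) ^ (n - s - j))
            * ((x + s) ^ s * (x + s)⁻¹) := by ring
        _ = ((n.choose j : ℝ) * ((n - j).choose s)) * (x + y + n) ^ j
            * ((-1) ^ (n - j) * (-1) ^ s * (x + s) ^ (n - j - s))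
            * ((x + s) ^ s * (x + s)⁻¹) := by rw [hcc, hexp, hsign]
        _ = ((n.choose j : ℝ) * (x + y + n) ^ j * (-1) ^ (n - j))
            * ((-1 : ℝ) ^ s * ((n - j).choose s)
              * ((x + s) ^ s * (x + s)⁻¹ * (x + s) ^ (n - j - s))) := by ring
        _ = _ := by rw [hpow]
    rw [Finset.sum_congr rfl term, ← Finset.mul_sum,
      finDiff (n - j) (n - j - 1) (by omega) x, mul_zero]
  rw [Finset.sum_congr rfl vanish, Finset.sum_const, smul_zero, zero_add]
  -- the j = n term: only s = 0 survives
  rw [← Finset.sum_subset (show range 1 ⊆ range (n + 1) from by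
      intro t ht; simp only [Finset.mem_range] at *; omega)
    (fun s hs hs2 => by
      simp only [Finset.mem_range] at hs hs2
      have hlt : n - s < n := by omega
      rw [Nat.choose_eq_zero_of_lt hlt]
      push_cast
      ring)]
  rw [Finset.sum_range_one]
  simp only [Nat.cast_zero, add_zero, Nat.choose_zero_right, Nat.cast_one, Nat.sub_zero,
    Nat.choose_self, Nat.sub_self, pow_zero]
  ring
end

section
/- For n ≥ 0 and x > 0, y ≥ 0, Σ_{s=0}^{n} C(n,s)(x+s)^{s−1}(y+n−s)^{n−s+1} = x^{−1} Σ_{s=0}^{n} C(n,s)(x+y+n)^{s}(y+n−s)(n−s)!. -/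
open Finset

private lemma nat_fact_step {n i : ℕ} (h : i < n) :
    n.choose (i+1) * (n-(i+1)).factorial * (i+1) = n.choose i * (n-i).factorial := by
  have h1 : n - i = (n - (i+1)) + 1 := by omega
  calc n.choose (i+1) * (n-(i+1)).factorial * (i+1)
      = (n.choose (i+1) * (i+1)) * (n-(i+1)).factorial := by ring
    _ = (n.choose i * (n - i)) * (n-(i+1)).factorial := by rw [Nat.choose_succ_right_eq]
    _ = n.choose i * (n - i).factorial := by
        rw [h1, Nat.factorial_succ]; ring

private lemma nat_fact_step2 {n s : ℕ} (h : s ≤ n) :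
    (n+1).choose s * (n+1-s).factorial = (n+1) * (n.choose s * (n-s).factorial) := by
  apply Nat.eq_of_mul_eq_mul_right (Nat.factorial_pos s)
  have e1 : (n+1).choose s * s.factorial * (n+1-s).factorial = (n+1).factorial :=
    Nat.choose_mul_factorial_mul_factorial (by omega)
  have e2 : n.choose s * s.factorial * (n-s).factorial = n.factorial :=
    Nat.choose_mul_factorial_mul_factorial h
  calc (n+1).choose s * (n+1-s).factorial * s.factorial
      = (n+1).choose s * s.factorial * (n+1-s).factorial := by ring
    _ = (n+1).factorial := e1
    _ = (n+1) * n.factorial := Nat.factorial_succ n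
    _ = (n+1) * (n.choose s * s.factorial * (n-s).factorial) := by rw [e2]
    _ = (n+1) * (n.choose s * (n-s).factorial) * s.factorial := by ring

private lemma pascal_split (n : ℕ) (f : ℕ → ℝ) :
    ∑ s ∈ range (n + 2), ((n+1).choose s : ℝ) * f s
      = ∑ s ∈ range (n + 1), (n.choose s : ℝ) * f (s+1)
        + ∑ s ∈ range (n + 1), (n.choose s : ℝ) * f s := by
  rw [Finset.sum_range_succ' (fun s => ((n+1).choose s : ℝ) * f s) (n+1)]
  have h1 : ∀ i ∈ range (n+1), (((n+1).choose (i+1) : ℝ)) * f (i+1)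
      = (n.choose i : ℝ) * f (i+1) + (n.choose (i+1) : ℝ) * f (i+1) := by
    intro i _
    rw [Nat.choose_succ_succ]
    push_cast; ring
  rw [Finset.sum_congr rfl h1, Finset.sum_add_distrib]
  have h2 : ∑ i ∈ range (n+1), (n.choose (i+1) : ℝ) * f (i+1) + ((n+1).choose 0 : ℝ) * f 0
      = ∑ s ∈ range (n+1), (n.choose s : ℝ) * f s := by
    have h3 := Finset.sum_range_succ' (fun s => (n.choose s : ℝ) * f s) (n+1)
    rw [Finset.sum_range_succ (fun s => (n.choose s : ℝ) * f s) (n+1)] at h3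
    simp only [Nat.choose_succ_self, Nat.cast_zero, zero_mul, add_zero] at h3
    norm_num at h3 ⊢
    exact h3.symm
  rw [add_assoc, h2]

private lemma pull_k (n : ℕ) (g : ℕ → ℝ) :
    ∑ s ∈ range (n + 2), ((n+1).choose s : ℝ) * s * g s
      = (n+1) * ∑ s ∈ range (n + 1), (n.choose s : ℝ) * g (s+1) := by
  rw [Finset.sum_range_succ' (fun s => ((n+1).choose s : ℝ) * s * g s) (n+1)]
  simp only [Nat.cast_zero, mul_zero, zero_mul, add_zero]
  rw [Finset.mul_sum]
  apply Finset.sum_congr rfl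
  intro i _
  have h : (((n+1).choose (i+1) : ℕ) : ℝ) * ((i+1 : ℕ) : ℝ)
      = ((n+1 : ℕ) : ℝ) * ((n.choose i : ℕ) : ℝ) := by
    rw [← Nat.cast_mul, ← Nat.cast_mul, ← Nat.add_one_mul_choose_eq]
  push_cast at h ⊢
  linear_combination g (i+1) * h

private lemma zpow_step (x : ℝ) (hx : x ≠ 0) (s : ℕ) :
    (x + s) ^ ((s : ℤ) - 1) * (x + s) = (x + s) ^ s := by
  cases s with
  | zero =>
      norm_num
      exact inv_mul_cancel₀ hx
  | succ s =>
      have h : ((s+1 : ℕ) : ℤ) - 1 = (s : ℤ) := by push_cast; ring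
      rw [h, zpow_natCast, ← pow_succ]

private lemma telescope (n : ℕ) (z : ℝ) :
    ∑ s ∈ range (n+1), (n.choose s : ℝ) * ((n-s).factorial : ℝ) * z^(s+1)
      - ∑ s ∈ range (n+1), (n.choose s : ℝ) * ((n-s).factorial : ℝ) * s * z^s
      = z^(n+1) := by
  rw [Finset.sum_range_succ (fun s => (n.choose s : ℝ) * ((n-s).factorial : ℝ) * z^(s+1)) n]
  rw [Finset.sum_range_succ' (fun s => (n.choose s : ℝ) * ((n-s).factorial : ℝ) * s * z^s) n]
  have h1 : ∀ i ∈ range n, (n.choose (i+1) : ℝ) * ((n-(i+1)).factorial : ℝ) * ((i+1 : ℕ) : ℝ) * z^(i+1)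
      = (n.choose i : ℝ) * ((n-i).factorial : ℝ) * z^(i+1) := by
    intro i hi
    have h := nat_fact_step (Finset.mem_range.mp hi)
    have h' := congrArg (fun m : ℕ => (m : ℝ)) h
    push_cast at h'
    push_cast
    linear_combination z^(i+1) * h'
  rw [Finset.sum_congr rfl h1]
  simp [Nat.choose_self]

private lemma abel_cauchy (n : ℕ) : ∀ x y : ℝ, 0 < x →
    (∑ s ∈ range (n+1), (n.choose s : ℝ) * (x+s)^((s:ℤ)-1) * (y+n-s)^(n-s)
        = x⁻¹ * (x+y+n)^n)
    ∧ (∑ s ∈ range (n+1), (n.choose s : ℝ) * (x+s)^s * (y+n-s)^(n-s)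
        = ∑ s ∈ range (n+1), (n.choose s : ℝ) * (x+y+n)^s * ((n-s).factorial : ℝ)) := by
  induction n with
  | zero =>
      intro x y hx
      constructor
      · simp [zpow_neg_one]
      · simp
  | succ n ih =>
      intro x y hx
      have hx' : x ≠ 0 := ne_of_gt hx
      obtain ⟨ihP1, ihQ1⟩ := ih x (y+1) hx
      obtain ⟨-, ihQ2⟩ := ih (x+1) y (by linarith)
      -- the shifted sum equals the Cauchy sum at (x+1, y)
      have hA : ∑ s ∈ range (n+1), (n.choose s : ℝ) *
            ((x + ((s+1 : ℕ) : ℝ)) ^ (((s+1 : ℕ) : ℤ) - 1)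
              * (y + ((n+1 : ℕ) : ℝ) - ((s+1 : ℕ) : ℝ)) ^ ((n+1) - (s+1)))
          = ∑ s ∈ range (n+1), (n.choose s : ℝ) * (x + y + ((n+1 : ℕ) : ℝ)) ^ s
              * (((n : ℕ)-s).factorial : ℝ) := by
        have e : ∀ s ∈ range (n+1), (n.choose s : ℝ) *
              ((x + ((s+1 : ℕ) : ℝ)) ^ (((s+1 : ℕ) : ℤ) - 1)
                * (y + ((n+1 : ℕ) : ℝ) - ((s+1 : ℕ) : ℝ)) ^ ((n+1) - (s+1)))
            = (n.choose s : ℝ) * (x + 1 + (s : ℝ)) ^ s * (y + (n : ℝ) - (s : ℝ)) ^ (n - s) := by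
          intro s _
          have e1 : ((s+1 : ℕ) : ℤ) - 1 = (s : ℤ) := by push_cast; ring
          have e2 : x + ((s+1 : ℕ) : ℝ) = x + 1 + (s : ℝ) := by push_cast; ring
          have e3 : y + ((n+1 : ℕ) : ℝ) - ((s+1 : ℕ) : ℝ) = y + (n : ℝ) - (s : ℝ) := by
            push_cast; ring
          have e4 : (n+1) - (s+1) = n - s := by omega
          rw [e1, e2, e3, e4, zpow_natCast, mul_assoc]
        rw [Finset.sum_congr rfl e, ihQ2]
        refine Finset.sum_congr rfl fun s _ => by push_cast; ring
      -- the unshifted sum, via the inductive hypotheses at (x, y+1)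
      have hB : ∑ s ∈ range (n+1), (n.choose s : ℝ) *
            ((x + (s : ℝ)) ^ ((s : ℤ) - 1) * (y + ((n+1 : ℕ) : ℝ) - (s : ℝ)) ^ ((n+1) - s))
          = (x + y + ((n+1 : ℕ) : ℝ)) * (x⁻¹ * (x + (y+1) + (n : ℝ)) ^ n)
            - ∑ s ∈ range (n+1), (n.choose s : ℝ) * (x + (y+1) + (n : ℝ)) ^ s
                * (((n : ℕ)-s).factorial : ℝ) := by
        have e : ∀ s ∈ range (n+1), (n.choose s : ℝ) *
              ((x + (s : ℝ)) ^ ((s : ℤ) - 1) * (y + ((n+1 : ℕ) : ℝ) - (s : ℝ)) ^ ((n+1) - s))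
            = (x + y + ((n+1 : ℕ) : ℝ)) *
                ((n.choose s : ℝ) * (x + (s : ℝ)) ^ ((s : ℤ) - 1)
                  * (y + 1 + (n : ℝ) - (s : ℝ)) ^ (n - s))
              - (n.choose s : ℝ) * (x + (s : ℝ)) ^ s * (y + 1 + (n : ℝ) - (s : ℝ)) ^ (n - s) := by
          intro s hs
          have hs' : s ≤ n := by have := Finset.mem_range.mp hs; omega
          have e4 : (n+1) - s = (n - s) + 1 := by omega
          have e3 : y + ((n+1 : ℕ) : ℝ) - (s : ℝ) = y + 1 + (n : ℝ) - (s : ℝ) := by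
            push_cast; ring
          rw [e4, e3, pow_succ, ← zpow_step x hx' s]
          push_cast
          ring
        rw [Finset.sum_congr rfl e, Finset.sum_sub_distrib, ← Finset.mul_sum, ihP1, ihQ1]
      -- Abel part at n+1
      have hP : ∑ s ∈ range (n+2), (((n+1).choose s : ℕ) : ℝ) *
            ((x + (s : ℝ)) ^ ((s : ℤ) - 1) * (y + ((n+1 : ℕ) : ℝ) - (s : ℝ)) ^ ((n+1) - s))
          = x⁻¹ * (x + y + ((n+1 : ℕ) : ℝ)) ^ (n+1) := by
        have hps := pascal_split n
          (fun s => (x + (s : ℝ)) ^ ((s : ℤ) - 1) * (y + ((n+1 : ℕ) : ℝ) - (s : ℝ)) ^ ((n+1) - s))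
        beta_reduce at hps
        rw [hps, hA, hB]
        have hz1 : x + (y+1) + (n : ℝ) = x + y + ((n+1 : ℕ) : ℝ) := by push_cast; ring
        rw [hz1]
        ring
      -- Cauchy part at n+1, left side
      have hQL : ∑ s ∈ range (n+2), (((n+1).choose s : ℕ) : ℝ) *
            ((x + (s : ℝ)) ^ s * (y + ((n+1 : ℕ) : ℝ) - (s : ℝ)) ^ ((n+1) - s))
          = x * (x⁻¹ * (x + y + ((n+1 : ℕ) : ℝ)) ^ (n+1))
            + ((n+1 : ℕ) : ℝ) * ∑ s ∈ range (n+1), (n.choose s : ℝ)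
                * (x + y + ((n+1 : ℕ) : ℝ)) ^ s * (((n : ℕ)-s).factorial : ℝ) := by
        have e : ∀ s ∈ range (n+2), (((n+1).choose s : ℕ) : ℝ) *
              ((x + (s : ℝ)) ^ s * (y + ((n+1 : ℕ) : ℝ) - (s : ℝ)) ^ ((n+1) - s))
            = x * ((((n+1).choose s : ℕ) : ℝ) *
                ((x + (s : ℝ)) ^ ((s : ℤ) - 1) * (y + ((n+1 : ℕ) : ℝ) - (s : ℝ)) ^ ((n+1) - s)))
              + (((n+1).choose s : ℕ) : ℝ) * (s : ℝ) *
                ((x + (s : ℝ)) ^ ((s : ℤ) - 1) * (y + ((n+1 : ℕ) : ℝ) - (s : ℝ)) ^ ((n+1) - s)) := by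
          intro s _
          rw [← zpow_step x hx' s]
          ring
        have hpk := pull_k n
          (fun s => (x + (s : ℝ)) ^ ((s : ℤ) - 1) * (y + ((n+1 : ℕ) : ℝ) - (s : ℝ)) ^ ((n+1) - s))
        beta_reduce at hpk
        rw [Finset.sum_congr rfl e, Finset.sum_add_distrib, ← Finset.mul_sum, hP, hpk, hA]
        push_cast
        ring
      -- Cauchy part at n+1, right side
      have hQR : ∑ s ∈ range (n+2), (((n+1).choose s : ℕ) : ℝ)
            * (x + y + ((n+1 : ℕ) : ℝ)) ^ s * ((((n+1) : ℕ)-s).factorial : ℝ)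
          = (x + y + ((n+1 : ℕ) : ℝ)) ^ (n+1)
            + ((n+1 : ℕ) : ℝ) * ∑ s ∈ range (n+1), (n.choose s : ℝ)
                * (x + y + ((n+1 : ℕ) : ℝ)) ^ s * (((n : ℕ)-s).factorial : ℝ) := by
        rw [Finset.sum_range_succ]
        have e : ∀ s ∈ range (n+1), (((n+1).choose s : ℕ) : ℝ)
              * (x + y + ((n+1 : ℕ) : ℝ)) ^ s * ((((n+1) : ℕ)-s).factorial : ℝ)
            = ((n+1 : ℕ) : ℝ) * ((n.choose s : ℝ) * (x + y + ((n+1 : ℕ) : ℝ)) ^ s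
                * (((n : ℕ)-s).factorial : ℝ)) := by
          intro s hs
          have hs' : s ≤ n := by have := Finset.mem_range.mp hs; omega
          have h := nat_fact_step2 hs'
          have h' := congrArg (fun m : ℕ => (m : ℝ)) h
          push_cast at h'
          push_cast
          linear_combination ((x + y + (n : ℝ) + 1) ^ s) * h'
        rw [Finset.sum_congr rfl e, ← Finset.mul_sum]
        simp [Nat.choose_self]
        ring
      constructor
      · rw [← hP]
        exact Finset.sum_congr rfl fun s _ => by rw [mul_assoc]
      · have hL : ∑ s ∈ range (n+1+1), (((n+1).choose s : ℕ) : ℝ) * (x + (s:ℝ)) ^ s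
              * (y + ((n+1 : ℕ) : ℝ) - (s:ℝ)) ^ ((n+1) - s)
            = ∑ s ∈ range (n+2), (((n+1).choose s : ℕ) : ℝ) *
              ((x + (s : ℝ)) ^ s * (y + ((n+1 : ℕ) : ℝ) - (s : ℝ)) ^ ((n+1) - s)) :=
          Finset.sum_congr rfl fun s _ => by rw [mul_assoc]
        rw [hL, hQL, hQR]
        have hxx : x * (x⁻¹ * (x + y + ((n+1 : ℕ) : ℝ)) ^ (n+1))
            = (x + y + ((n+1 : ℕ) : ℝ)) ^ (n+1) := by
          rw [← mul_assoc, mul_inv_cancel₀ hx']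
          ring
        rw [hxx]

/-- Abel's binomial theorem, case `A_n(x, y; -1, 1)`:
`Σ_{s=0}^{n} C(n,s)(x+s)^(s-1)(y+n-s)^(n-s+1)
  = x⁻¹ Σ_{s=0}^{n} C(n,s)(x+y+n)^s (y+n-s)(n-s)!`. -/
theorem abel_neg_one_one (n : ℕ) (x y : ℝ) (hx : 0 < x) (hy : 0 ≤ y) :
    ∑ s ∈ Finset.range (n + 1),
        (n.choose s : ℝ) * (x + s) ^ ((s : ℤ) - 1) * (y + n - s) ^ (n - s + 1) =
      x⁻¹ * ∑ s ∈ Finset.range (n + 1),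
        (n.choose s : ℝ) * (x + y + n) ^ s * (y + n - s) * ((n - s).factorial : ℝ) := by
  have hx' : x ≠ 0 := ne_of_gt hx
  obtain ⟨hP, hQ⟩ := abel_cauchy n x y hx
  have hL : ∑ s ∈ range (n + 1),
        (n.choose s : ℝ) * (x + s) ^ ((s : ℤ) - 1) * (y + n - s) ^ (n - s + 1)
      = (x + y + (n : ℝ)) * (x⁻¹ * (x + y + (n : ℝ)) ^ n)
        - ∑ s ∈ range (n+1), (n.choose s : ℝ) * (x + y + (n : ℝ)) ^ s
            * ((n - s).factorial : ℝ) := by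
    have e : ∀ s ∈ range (n+1), (n.choose s : ℝ) * (x + (s:ℝ)) ^ ((s : ℤ) - 1)
          * (y + (n:ℝ) - (s:ℝ)) ^ (n - s + 1)
        = (x + y + (n : ℝ)) * ((n.choose s : ℝ) * (x + (s:ℝ)) ^ ((s : ℤ) - 1)
            * (y + (n:ℝ) - (s:ℝ)) ^ (n - s))
          - (n.choose s : ℝ) * (x + (s:ℝ)) ^ s * (y + (n:ℝ) - (s:ℝ)) ^ (n - s) := by
      intro s _
      rw [pow_succ, ← zpow_step x hx' s]
      ring
    rw [Finset.sum_congr rfl e, Finset.sum_sub_distrib, ← Finset.mul_sum, hP, hQ]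
  have hR : ∑ s ∈ range (n + 1),
        (n.choose s : ℝ) * (x + y + (n:ℝ)) ^ s * (y + (n:ℝ) - (s:ℝ)) * ((n - s).factorial : ℝ)
      = (x + y + (n:ℝ)) ^ (n+1)
        - x * ∑ s ∈ range (n+1), (n.choose s : ℝ) * (x + y + (n:ℝ)) ^ s
            * ((n - s).factorial : ℝ) := by
    have e : ∀ s ∈ range (n+1), (n.choose s : ℝ) * (x + y + (n:ℝ)) ^ s
          * (y + (n:ℝ) - (s:ℝ)) * ((n - s).factorial : ℝ)
        = ((n.choose s : ℝ) * ((n - s).factorial : ℝ) * (x + y + (n:ℝ)) ^ (s+1)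
            - (n.choose s : ℝ) * ((n - s).factorial : ℝ) * (s:ℝ) * (x + y + (n:ℝ)) ^ s)
          - x * ((n.choose s : ℝ) * (x + y + (n:ℝ)) ^ s * ((n - s).factorial : ℝ)) := by
      intro s _
      rw [pow_succ]
      ring
    rw [Finset.sum_congr rfl e, Finset.sum_sub_distrib, Finset.sum_sub_distrib,
      ← Finset.mul_sum, telescope]
  rw [hL, hR]
  field_simp
  ring
end

section
/- For parking function π chosen uniformly at random from PF(m,n), the probability P(π₁ = j) equals (n−m+2)/((n−m+1)(n+1)) for every j with 1 ≤ j ≤ n−m+1; in particular P(π₁ = 1) = ⋯ = P(π₁ = n−m+1). -/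
open Finset
namespace PFaux

/-- Spot `s` is empty for car multiplicity function `w` on `ZMod q`: every cyclic
interval ending at `s` contains fewer cars than its length. -/
def emptyAt (q : ℕ) (w : ZMod q → ℕ) (s : ZMod q) : Prop :=
  ∀ t ∈ Finset.Icc 1 q, (∑ i ∈ Finset.range t, w (s - (i : ℕ))) < t

variable {q : ℕ} (w : ZMod q → ℕ)
def H (q : ℕ) (w : ZMod q → ℕ) (x : ℕ) : ℤ :=
  (x : ℤ) - ∑ t ∈ Finset.range x, (w ((t : ℕ) : ZMod q) : ℤ)
variable [NeZero q] {w}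

lemma castInj {a b : ℕ} (ha : a < q) (hb : b < q) (h : (a : ZMod q) = b) : a = b := by
  have := congrArg ZMod.val h
  rwa [ZMod.val_natCast, ZMod.val_natCast, Nat.mod_eq_of_lt ha, Nat.mod_eq_of_lt hb] at this

lemma sum_range_q : ∑ t ∈ Finset.range q, (w ((t : ℕ) : ZMod q) : ℤ) = ∑ z, (w z : ℤ) := by
  apply Finset.sum_nbij' (i := fun t => ((t : ℕ) : ZMod q)) (j := fun z => z.val)
  · intro a _; exact Finset.mem_univ _
  · intro z _; exact Finset.mem_range.2 z.val_lt
  · intro a ha; exact castInj (ZMod.val_lt _) (Finset.mem_range.1 ha)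
      (by rw [ZMod.natCast_val, ZMod.cast_natCast'])
  · intro z _; exact ZMod.natCast_rightInverse z
  · intro a _; rfl

lemma W_periodic (x : ℕ) : (((x + q : ℕ) : ZMod q)) = ((x : ℕ) : ZMod q) := by
  push_cast; simp

lemma H_add_q {k : ℕ} (hk : ∑ z, w z = k) (x : ℕ) :
    H q w (x + q) = H q w x + ((q : ℤ) - k) := by
  induction x with
  | zero =>
    have : ∑ z, (w z : ℤ) = (k : ℤ) := by rw [← hk]; push_cast; rfl
    simp [H, sum_range_q, this]
  | succ x ih =>
    have h1 : x + 1 + q = (x + q) + 1 := by ring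
    have h2 : H q w ((x + q) + 1) = H q w (x + q) + 1 - w (((x + q : ℕ)) : ZMod q) := by
      simp [H, Finset.sum_range_succ]; ring
    have h3 : H q w (x + 1) = H q w x + 1 - w ((x : ℕ) : ZMod q) := by
      simp [H, Finset.sum_range_succ]; ring
    rw [h1, h2, W_periodic, ih, h3]; ring

lemma H_succ_le (x : ℕ) : H q w (x + 1) ≤ H q w x + 1 := by
  simp only [H, Finset.sum_range_succ]
  push_cast
  omega

def Rec (q : ℕ) (w : ZMod q → ℕ) (x : ℕ) : Prop := ∀ y < x, H q w y < H q w x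

lemma H_add_mul_q {k : ℕ} (hk : ∑ z, w z = k) (x j : ℕ) :
    H q w (x + j * q) = H q w x + j * ((q : ℤ) - k) := by
  induction j with
  | zero => simp
  | succ j ih =>
    have : x + (j + 1) * q = (x + j * q) + q := by ring
    rw [this, H_add_q hk, ih]; push_cast; ring

lemma windowRec {k : ℕ} (hk : ∑ z, w z = k) (hkq : k ≤ q) {x : ℕ} (hq : q ≤ x)
    (h : ∀ y, x - q ≤ y → y < x → H q w y < H q w x) : Rec q w x := by
  intro y hy
  set j := (x - 1 - y) / q with hj
  have hq0 : 0 < q := NeZero.pos q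
  have e1 : q * j + (x - 1 - y) % q = x - 1 - y := Nat.div_add_mod _ _
  have e2 : (x - 1 - y) % q < q := Nat.mod_lt _ hq0
  have e3 : q * j = j * q := Nat.mul_comm _ _
  have hyj1 : y + j * q < x := by omega
  have hyj2 : x - q ≤ y + j * q := by omega
  have : H q w y ≤ H q w (y + j * q) := by
    rw [H_add_mul_q hk]
    have : (0 : ℤ) ≤ (j : ℤ) * ((q : ℤ) - k) := by
      apply mul_nonneg (by positivity)
      have : (k : ℤ) ≤ q := by exact_mod_cast hkq
      omega
    omega
  exact lt_of_le_of_lt this (h _ hyj2 hyj1)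

lemma rec_lt_of_lt {x₁ x₂ : ℕ} (h2 : Rec q w x₂) (h : x₁ < x₂) : H q w x₁ < H q w x₂ :=
  h2 _ h

instance : DecidablePred (Rec q w) := fun _ => by unfold Rec; infer_instance

lemma recCount {k : ℕ} (hk : ∑ z, w z = k) (hkq : k < q) :
    (((Finset.Ioc q (2 * q)).filter (Rec q w)).card : ℤ) = (q : ℤ) - k := by
  classical
  have hq0 : 0 < q := NeZero.pos q
  set r : ℤ := (q : ℤ) - k with hr
  have hkq' : (k : ℤ) < q := by exact_mod_cast hkq
  have hr0 : 0 < r := by omega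
  have hIne : ((Finset.range (q + 1)).image (H q w)).Nonempty :=
    (Finset.nonempty_range_iff.2 (by omega)).image _
  set M := ((Finset.range (q + 1)).image (H q w)).max' hIne with hM
  have hle : ∀ y, y ≤ q → H q w y ≤ M := fun y hy =>
    Finset.le_max' _ _ (Finset.mem_image_of_mem _ (Finset.mem_range.2 (by omega)))
  obtain ⟨y₀, hy₀mem, hy₀⟩ := Finset.mem_image.1 (Finset.max'_mem _ hIne)
  have hy₀q : y₀ ≤ q := by have := Finset.mem_range.1 hy₀mem; omega
  have hcard : ((Finset.Ioc q (2 * q)).filter (Rec q w)).card = (Finset.Ioc M (M + r)).card := by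
    apply Finset.card_bij (i := fun x _ => H q w x)
    · intro x hx
      obtain ⟨hx1, hx2⟩ := Finset.mem_filter.1 hx
      obtain ⟨hxq, hx2q⟩ := Finset.mem_Ioc.1 hx1
      refine Finset.mem_Ioc.2 ⟨?_, ?_⟩
      · calc M = H q w y₀ := hy₀.symm
          _ < H q w x := hx2 _ (by omega)
      · have hxe : x - q + q = x := by omega
        have h1 : H q w ((x - q) + q) = H q w (x - q) + r := H_add_q hk _
        rw [hxe] at h1
        have h2 : H q w (x - q) ≤ M := hle _ (by omega)
        omega
    · intro x1 hx1 x2 hx2 hH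
      obtain ⟨_, hr1⟩ := Finset.mem_filter.1 hx1
      obtain ⟨_, hr2⟩ := Finset.mem_filter.1 hx2
      rcases lt_trichotomy x1 x2 with h | h | h
      · exact absurd hH (ne_of_lt (hr2 _ h))
      · exact h
      · exact absurd hH.symm (ne_of_lt (hr1 _ h))
    · intro v hv
      obtain ⟨hv1, hv2⟩ := Finset.mem_Ioc.1 hv
      have hTne : y₀ + q ∈ (Finset.range (2 * q + 1)).filter (fun x => v ≤ H q w x) := by
        refine Finset.mem_filter.2 ⟨Finset.mem_range.2 (by omega), ?_⟩
        have : H q w (y₀ + q) = H q w y₀ + r := H_add_q hk _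
        omega
      set T := (Finset.range (2 * q + 1)).filter (fun x => v ≤ H q w x) with hT
      have hne : T.Nonempty := ⟨_, hTne⟩
      set x := T.min' hne with hx
      have hxmem : x ∈ T := T.min'_mem hne
      obtain ⟨hxr, hxv⟩ := Finset.mem_filter.1 hxmem
      have hx2q : x ≤ 2 * q := by have := Finset.mem_range.1 hxr; omega
      have hbelow : ∀ y, y < x → H q w y < v := by
        intro y hy
        by_contra hcon
        push_neg at hcon
        have hmem : y ∈ T := Finset.mem_filter.2 ⟨Finset.mem_range.2 (by omega), hcon⟩
        have h2 : x ≤ y := Finset.min'_le T y hmem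
        omega
      have hxq : q < x := by
        by_contra hcon
        push_neg at hcon
        have := hle x hcon
        omega
      have hHx : H q w x = v := by
        have h1 : H q w (x - 1) < v := hbelow _ (by omega)
        have h2 : H q w x ≤ H q w (x - 1) + 1 := by
          have hxe : x = (x - 1) + 1 := by omega
          calc H q w x = H q w ((x - 1) + 1) := by rw [← hxe]
            _ ≤ H q w (x - 1) + 1 := H_succ_le _
        omega
      exact ⟨x, Finset.mem_filter.2 ⟨Finset.mem_Ioc.2 ⟨hxq, hx2q⟩,
        fun y hy => by rw [hHx]; exact hbelow y hy⟩, hHx⟩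
  rw [hcard, Int.card_Ioc]
  omega

lemma cast_val (s : ZMod q) : ((s.val : ℕ) : ZMod q) = s := ZMod.natCast_rightInverse s

lemma emptyAt_iff_rec {k : ℕ} (hk : ∑ z, w z = k) (hkq : k ≤ q) (s : ZMod q) :
    emptyAt q w s ↔ Rec q w (s.val + q + 1) := by
  have hq0 : 0 < q := NeZero.pos q
  have hsv : s.val < q := s.val_lt
  set x := s.val + q with hxdef
  have key : ∀ t, 1 ≤ t → t ≤ q →
      ((∑ i ∈ Finset.range t, (w (s - (i : ℕ)) : ℤ)) = H q w (x + 1 - t) - H q w (x + 1) + t) := by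
    intro t h1 h2
    have hstep1 : ∑ i ∈ Finset.range t, (w (s - (i : ℕ)) : ℤ)
        = ∑ i ∈ Finset.range t, (w (((x - i : ℕ) : ZMod q)) : ℤ) := by
      apply Finset.sum_congr rfl
      intro i hi
      have hix : i ≤ x := by have := Finset.mem_range.1 hi; omega
      congr 2
      rw [Nat.cast_sub hix]
      have hx1 : ((x : ℕ) : ZMod q) = s := by
        rw [hxdef]; push_cast [cast_val]; simp
      rw [hx1]
    have hstep2 : ∑ i ∈ Finset.range t, (w (((x - i : ℕ) : ZMod q)) : ℤ)
        = ∑ i ∈ Finset.range t, (w (((x + 1 - t + i : ℕ) : ZMod q)) : ℤ) := by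
      have hrefl := Finset.sum_range_reflect
        (fun i => (w (((x + 1 - t + i : ℕ) : ZMod q)) : ℤ)) t
      rw [← hrefl]
      apply Finset.sum_congr rfl
      intro i hi
      have := Finset.mem_range.1 hi
      congr 3
      omega
    have hstep3 : ∑ i ∈ Finset.range t, (w (((x + 1 - t + i : ℕ) : ZMod q)) : ℤ)
        = ∑ y ∈ Finset.Ico (x + 1 - t) (x + 1), (w ((y : ℕ) : ZMod q) : ℤ) := by
      have hms : (x + 1) - (x + 1 - t) = t := by omega
      rw [Finset.sum_Ico_eq_sum_range, hms]
    have hstep4 : ∑ y ∈ Finset.Ico (x + 1 - t) (x + 1), (w ((y : ℕ) : ZMod q) : ℤ)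
        = (∑ y ∈ Finset.range (x + 1), (w ((y : ℕ) : ZMod q) : ℤ))
          - ∑ y ∈ Finset.range (x + 1 - t), (w ((y : ℕ) : ZMod q) : ℤ) := by
      rw [Finset.sum_Ico_eq_sub _ (by omega)]
    rw [hstep1, hstep2, hstep3, hstep4]
    simp only [H]
    have : ((x + 1 - t : ℕ) : ℤ) = (x : ℤ) + 1 - t := by
      rw [Nat.cast_sub (show t ≤ x + 1 by omega)]; push_cast; ring
    rw [this]
    push_cast
    ring
  constructor
  · intro hE
    apply windowRec hk hkq (show q ≤ x + 1 by omega)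
    intro y hy1 hy2
    have ht1 : 1 ≤ x + 1 - y := by omega
    have ht2 : x + 1 - y ≤ q := by omega
    have hEt := hE (x + 1 - y) (Finset.mem_Icc.2 ⟨ht1, ht2⟩)
    have hkey := key (x + 1 - y) ht1 ht2
    have hy : x + 1 - (x + 1 - y) = y := by omega
    rw [hy] at hkey
    have hcast : (∑ i ∈ Finset.range (x + 1 - y), (w (s - (i : ℕ)) : ℤ)) < (x + 1 - y : ℕ) := by
      exact_mod_cast hEt
    omega
  · intro hR t ht
    obtain ⟨ht1, ht2⟩ := Finset.mem_Icc.1 ht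
    have hkey := key t ht1 ht2
    have hlt : H q w (x + 1 - t) < H q w (x + 1) := hR _ (by omega)
    have : (∑ i ∈ Finset.range t, (w (s - (i : ℕ)) : ℤ)) < t := by omega
    exact_mod_cast this

instance : DecidablePred (emptyAt q w) := fun _ => by unfold emptyAt; infer_instance

lemma card_emptyFinset {k : ℕ} (hk : ∑ z, w z = k) (hkq : k < q) :
    ((Finset.univ.filter (fun s => emptyAt q w s)).card : ℤ) = (q : ℤ) - k := by
  rw [← recCount hk hkq]
  congr 1
  apply Finset.card_bij (i := fun s _ => s.val + q + 1)
  · intro s hs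
    refine Finset.mem_filter.2 ⟨Finset.mem_Ioc.2 ⟨by omega, by have := s.val_lt; omega⟩, ?_⟩
    exact (emptyAt_iff_rec hk (le_of_lt hkq) s).1 (Finset.mem_filter.1 hs).2
  · intro s1 _ s2 _ h
    exact ZMod.val_injective _ (by omega)
  · intro x hx
    obtain ⟨hx1, hx2⟩ := Finset.mem_filter.1 hx
    obtain ⟨hxq, hx2q⟩ := Finset.mem_Ioc.1 hx1
    have hsv : ((x - 1 - q : ℕ) : ZMod q).val = x - 1 - q := ZMod.val_cast_of_lt (by omega)
    refine ⟨((x - 1 - q : ℕ) : ZMod q), Finset.mem_filter.2 ⟨Finset.mem_univ _, ?_⟩, by omega⟩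
    refine (emptyAt_iff_rec hk (le_of_lt hkq) _).2 ?_
    rw [show ((x - 1 - q : ℕ) : ZMod q).val + q + 1 = x by omega]
    exact hx2

/-- number of cars at each spot -/
def cnt (k q : ℕ) (τ : Fin k → ZMod q) : ZMod q → ℕ :=
  fun z => (Finset.univ.filter (fun a => τ a = z)).card

lemma sum_cnt {k : ℕ} (τ : Fin k → ZMod q) : ∑ z, cnt k q τ z = k := by
  classical
  have := Finset.card_eq_sum_card_fiberwise (f := τ) (s := (Finset.univ : Finset (Fin k)))
    (t := (Finset.univ : Finset (ZMod q))) (fun a _ => Finset.mem_univ (τ a))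
  simpa [cnt, Finset.card_univ] using this.symm

lemma cnt_shift {k : ℕ} (τ : Fin k → ZMod q) (s z : ZMod q) :
    cnt k q (fun a => τ a + s) z = cnt k q τ (z - s) := by
  unfold cnt
  congr 1
  apply Finset.filter_congr
  intro a _
  simp [eq_sub_iff_add_eq]

lemma emptyAt_shift {k : ℕ} (τ : Fin k → ZMod q) (s : ZMod q) :
    emptyAt q (cnt k q (fun a => τ a + s)) s ↔ emptyAt q (cnt k q τ) 0 := by
  have hsum : ∀ t : ℕ, (∑ i ∈ Finset.range t, cnt k q (fun a => τ a + s) (s - (i : ℕ)))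
      = ∑ i ∈ Finset.range t, cnt k q τ (0 - (i : ℕ)) := by
    intro t
    apply Finset.sum_congr rfl
    intro i _
    rw [cnt_shift]
    congr 1
    ring
  unfold emptyAt
  constructor <;> intro h t ht <;> have h' := h t ht
  · rwa [hsum] at h'
  · rwa [hsum]

lemma Kcount {k : ℕ} (hkq : k < q) :
    q * ((Finset.univ.filter fun τ : Fin k → ZMod q => emptyAt q (cnt k q τ) 0).card)
      = (q - k) * q ^ k := by
  classical
  have hfix : ∀ s : ZMod q,
      (Finset.univ.filter fun τ : Fin k → ZMod q => emptyAt q (cnt k q τ) s).card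
        = (Finset.univ.filter fun τ : Fin k → ZMod q => emptyAt q (cnt k q τ) 0).card := by
    intro s
    symm
    apply Finset.card_bij (i := fun τ _ => fun a => τ a + s)
    · intro τ hτ
      exact Finset.mem_filter.2 ⟨Finset.mem_univ _,
        (emptyAt_shift τ s).2 (Finset.mem_filter.1 hτ).2⟩
    · intro τ1 _ τ2 _ h
      funext a
      have := congrFun h a
      simpa using this
    · intro σ hσ
      refine ⟨fun a => σ a - s, Finset.mem_filter.2 ⟨Finset.mem_univ _, ?_⟩, by funext a; ring⟩
      have heq : (fun a => (fun a => σ a - s) a + s) = σ := by funext a; ring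
      have h2 := emptyAt_shift (q := q) (fun a => σ a - s) s
      rw [heq] at h2
      exact h2.1 (Finset.mem_filter.1 hσ).2
  have hswap : ∑ s : ZMod q,
      ((Finset.univ.filter fun τ : Fin k → ZMod q => emptyAt q (cnt k q τ) s).card)
      = ∑ τ : Fin k → ZMod q,
        ((Finset.univ.filter fun s : ZMod q => emptyAt q (cnt k q τ) s).card) := by
    simp only [Finset.card_filter]
    exact Finset.sum_comm
  have hper : ∀ τ : Fin k → ZMod q,
      ((Finset.univ.filter fun s : ZMod q => emptyAt q (cnt k q τ) s).card) = q - k := by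
    intro τ
    have := card_emptyFinset (sum_cnt τ) hkq
    omega
  have hleft : ∑ s : ZMod q,
      ((Finset.univ.filter fun τ : Fin k → ZMod q => emptyAt q (cnt k q τ) s).card)
      = q * ((Finset.univ.filter fun τ : Fin k → ZMod q => emptyAt q (cnt k q τ) 0).card) := by
    rw [Finset.sum_congr rfl (fun s _ => hfix s)]
    simp [Finset.card_univ, ZMod.card, mul_comm]
  have hright : ∑ τ : Fin k → ZMod q,
      ((Finset.univ.filter fun s : ZMod q => emptyAt q (cnt k q τ) s).card) = (q - k) * q ^ k := by
    rw [Finset.sum_congr rfl (fun τ _ => hper τ)]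
    simp [Finset.card_univ, mul_comm]
  rw [← hleft, hswap, hright]


lemma neg_eq_cast (z : ZMod q) : ((q - z.val : ℕ) : ZMod q) = -z := by
  rw [Nat.cast_sub z.val_le]
  simp [cast_val]

lemma one_le_val {z : ZMod q} (hz : z ≠ 0) : 1 ≤ z.val := by
  rcases Nat.eq_zero_or_pos z.val with h | h
  · exact absurd ((ZMod.val_eq_zero z).1 h) hz
  · exact h

lemma zero_sub_cast_eq_iff {t : ℕ} (ht : t ≤ q) {z : ZMod q} (hz : z ≠ 0) {i : ℕ} (hi : i < t) :
    ((0 : ZMod q) - (i : ℕ) = z) ↔ i = q - z.val := by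
  have hzv : 1 ≤ z.val := one_le_val hz
  have hzq : z.val < q := z.val_lt
  constructor
  · intro h
    have h2 : ((i : ℕ) : ZMod q) = ((q - z.val : ℕ) : ZMod q) := by
      rw [neg_eq_cast, ← h]; ring
    exact castInj (by omega) (by omega) h2
  · rintro rfl
    rw [neg_eq_cast]; ring

/-- Adding one extra car at `u` keeps spot `0` empty, provided some spot `e`
cyclically between `u` and `0` is empty. -/
lemma emptyAt_add_delta {w : ZMod q → ℕ} {u e : ZMod q}
    (h0 : emptyAt q w 0) (he : emptyAt q w e) (hu1 : 1 ≤ u.val) (hue : u.val ≤ e.val) :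
    emptyAt q (fun z => w z + if u = z then 1 else 0) 0 := by
  have hq0 : 0 < q := NeZero.pos q
  have heq : e.val < q := e.val_lt
  have hnz : u ≠ 0 := fun h => by rw [h] at hu1; simp [ZMod.val_zero] at hu1
  have henz : e ≠ 0 := by intro h; rw [h, ZMod.val_zero] at hue; omega
  intro t ht
  obtain ⟨ht1, ht2⟩ := Finset.mem_Icc.1 ht
  have hsplit : (∑ i ∈ Finset.range t, (fun z => w z + if u = z then 1 else 0) ((0 : ZMod q) - (i : ℕ)))
      = (∑ i ∈ Finset.range t, w ((0 : ZMod q) - (i : ℕ)))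
        + ∑ i ∈ Finset.range t, (if ((0 : ZMod q) - (i : ℕ)) = u then 1 else 0) := by
    rw [← Finset.sum_add_distrib]
    apply Finset.sum_congr rfl
    intro i _
    congr 1
    simp [eq_comm]
  rw [hsplit]
  have hdelta : (∑ i ∈ Finset.range t, (if ((0 : ZMod q) - (i : ℕ)) = u then 1 else 0))
      = if q - u.val < t then 1 else 0 := by
    have : ∀ i ∈ Finset.range t, (if ((0 : ZMod q) - (i : ℕ)) = u then 1 else 0)
        = if i = q - u.val then 1 else 0 := by
      intro i hi
      have hi' := Finset.mem_range.1 hi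
      by_cases hc : ((0 : ZMod q) - (i : ℕ)) = u
      · rw [if_pos hc, if_pos ((zero_sub_cast_eq_iff ht2 hnz hi').1 hc)]
      · rw [if_neg hc, if_neg (fun h => hc ((zero_sub_cast_eq_iff ht2 hnz hi').2 h))]
    rw [Finset.sum_congr rfl this, Finset.sum_ite_eq' (Finset.range t) (q - u.val) (fun _ => 1)]
    simp [Finset.mem_range]
  rw [hdelta]
  by_cases hcase : q - u.val < t
  · rw [if_pos hcase]
    set t' := q - e.val with ht'
    have ht'1 : 1 ≤ t' := by omega
    have ht't : t' < t := by omega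
    have hIco : (∑ i ∈ Finset.range t, w ((0 : ZMod q) - (i : ℕ)))
        = (∑ i ∈ Finset.range t', w ((0 : ZMod q) - (i : ℕ)))
          + ∑ i ∈ Finset.Ico t' t, w ((0 : ZMod q) - (i : ℕ)) := by
      rw [Finset.range_eq_Ico, Finset.range_eq_Ico,
        Finset.sum_Ico_consecutive _ (Nat.zero_le t') (le_of_lt ht't)]
    have hIco2 : (∑ i ∈ Finset.Ico t' t, w ((0 : ZMod q) - (i : ℕ)))
        = ∑ i ∈ Finset.range (t - t'), w (e - (i : ℕ)) := by
      rw [Finset.sum_Ico_eq_sum_range]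
      apply Finset.sum_congr rfl
      intro i _
      congr 1
      have harg : ((t' + i : ℕ) : ZMod q) = -e + (i : ℕ) := by
        push_cast [ht', neg_eq_cast]
        ring
      rw [harg]
      ring
    have h1 : (∑ i ∈ Finset.range t', w ((0 : ZMod q) - (i : ℕ))) < t' :=
      h0 t' (Finset.mem_Icc.2 ⟨ht'1, by omega⟩)
    have h2 : (∑ i ∈ Finset.range (t - t'), w (e - (i : ℕ))) < t - t' :=
      he (t - t') (Finset.mem_Icc.2 ⟨by omega, by omega⟩)
    omega
  · rw [if_neg hcase]
    have := h0 t ht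
    omega

lemma exists_empty_ge {w : ZMod q → ℕ} {k j : ℕ} (hk : ∑ z, w z = k) (hkq : k < q)
    (hjk : j + k < q) : ∃ e : ZMod q, emptyAt q w e ∧ j ≤ e.val := by
  classical
  by_contra hcon
  push_neg at hcon
  have hsub : (Finset.univ.filter (fun s => emptyAt q w s))
      ⊆ (Finset.range j).image (fun i => ((i : ℕ) : ZMod q)) := by
    intro e hepr
    obtain ⟨-, hee⟩ := Finset.mem_filter.1 hepr
    exact Finset.mem_image.2 ⟨e.val, Finset.mem_range.2 (by have := hcon e hee; omega),
      cast_val e⟩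
  have h1 := Finset.card_le_card hsub
  have h2 := (Finset.card_image_le (s := Finset.range j) (f := fun i => ((i : ℕ) : ZMod q)))
  have h3 := card_emptyFinset hk hkq
  rw [Finset.card_range] at h2
  omega

lemma emptyAt_mono {w w' : ZMod q → ℕ} {s : ZMod q} (hle : ∀ z, w z ≤ w' z)
    (h : emptyAt q w' s) : emptyAt q w s :=
  fun t ht => lt_of_le_of_lt (Finset.sum_le_sum fun _ _ => hle _) (h t ht)

lemma cnt_cons {k : ℕ} (x : ZMod q) (σ : Fin k → ZMod q) (z : ZMod q) :
    cnt (k + 1) q (Fin.cons x σ) z = cnt k q σ z + if x = z then 1 else 0 := by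
  unfold cnt
  rw [Finset.card_filter, Finset.card_filter, Fin.sum_univ_succ]
  simp only [Fin.cons_zero, Fin.cons_succ]
  ring

lemma ne_zero_of_emptyAt_zero {k : ℕ} {τ : Fin k → ZMod q}
    (h : emptyAt q (cnt k q τ) 0) (a : Fin k) : τ a ≠ 0 := by
  have hq0 : 0 < q := NeZero.pos q
  have h1 := h 1 (Finset.mem_Icc.2 ⟨le_refl 1, hq0⟩)
  rw [Finset.sum_range_one] at h1
  simp only [Nat.cast_zero, sub_zero] at h1
  have hzero : cnt k q τ 0 = 0 := by omega
  intro hc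
  have : a ∈ Finset.univ.filter (fun a => τ a = (0 : ZMod q)) :=
    Finset.mem_filter.2 ⟨Finset.mem_univ _, hc⟩
  unfold cnt at hzero
  rw [Finset.card_eq_zero] at hzero
  rw [hzero] at this
  exact absurd this (Finset.notMem_empty _)

/-- key sum-to-card conversion: the number of cars in the cyclic interval of
length `t` ending at `0` equals the number of cars with value `> q - t`. -/
lemma sum_cnt_range {k : ℕ} {τ : Fin k → ZMod q} (hnz : ∀ a, τ a ≠ 0)
    {t : ℕ} (ht1 : 1 ≤ t) (ht2 : t ≤ q) :
    (∑ i ∈ Finset.range t, cnt k q τ ((0 : ZMod q) - (i : ℕ)))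
      = (Finset.univ.filter (fun a => q - t < (τ a).val)).card := by
  classical
  unfold cnt
  rw [Finset.card_filter]
  simp only [Finset.card_filter]
  rw [Finset.sum_comm]
  apply Finset.sum_congr rfl
  intro a _
  have hzv : 1 ≤ (τ a).val := one_le_val (hnz a)
  have hzq : (τ a).val < q := (τ a).val_lt
  have hstep : ∀ i ∈ Finset.range t, (if τ a = ((0 : ZMod q) - (i : ℕ)) then 1 else 0)
      = if i = q - (τ a).val then 1 else 0 := by
    intro i hi
    have hi' := Finset.mem_range.1 hi
    by_cases hc : ((0 : ZMod q) - (i : ℕ)) = τ a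
    · rw [if_pos hc.symm, if_pos ((zero_sub_cast_eq_iff ht2 (hnz a) hi').1 hc)]
    · rw [if_neg (fun h => hc h.symm),
        if_neg (fun h => hc ((zero_sub_cast_eq_iff ht2 (hnz a) hi').2 h))]
  rw [Finset.sum_congr rfl hstep, Finset.sum_ite_eq' (Finset.range t) _ (fun _ => 1)]
  simp only [Finset.mem_range]
  by_cases hc2 : q - (τ a).val < t
  · rw [if_pos hc2, if_pos (by omega)]
  · rw [if_neg hc2, if_neg (by omega)]

end PFaux

namespace PFaux

lemma isPF_iff_empty {m n : ℕ} (hm : 1 ≤ m) (hmn : m ≤ n) (π : Fin m → ℕ)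
    (hrange : ∀ a, 1 ≤ π a ∧ π a ≤ n) :
    IsPF m n π ↔ emptyAt (n+1) (cnt m (n+1) (fun a => ((π a : ℕ) : ZMod (n+1)))) 0 := by
  classical
  set τ : Fin m → ZMod (n+1) := fun a => ((π a : ℕ) : ZMod (n+1)) with hτ
  have hval : ∀ a, (τ a).val = π a := fun a =>
    ZMod.val_cast_of_lt (by have := (hrange a).2; omega)
  have hnz : ∀ a, τ a ≠ 0 := by
    intro a h
    have h2 := hval a
    rw [h, ZMod.val_zero] at h2
    have := (hrange a).1
    omega
  have hcardsplit : ∀ i : ℕ,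
      (Finset.univ.filter (fun a => π a ≤ i)).card
        + (Finset.univ.filter (fun a => i < π a)).card = m := by
    intro i
    rw [show (Finset.univ.filter (fun a => i < π a))
        = (Finset.univ.filter (fun a => ¬ π a ≤ i)) from
      Finset.filter_congr (fun a _ => by constructor <;> intro <;> omega)]
    rw [Finset.card_filter_add_card_filter_not]
    simp
  have hcnt : ∀ t, 1 ≤ t → t ≤ n + 1 →
      ((∑ i ∈ Finset.range t, cnt m (n+1) τ ((0 : ZMod (n+1)) - (i : ℕ)))
        = (Finset.univ.filter (fun a => n + 1 - t < π a)).card) := by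
    intro t h1 h2
    rw [sum_cnt_range hnz h1 h2]
    congr 1
    apply Finset.filter_congr
    intro a _
    rw [hval a]
  constructor
  · rintro ⟨_, hPF⟩ t ht
    obtain ⟨ht1, ht2⟩ := Finset.mem_Icc.1 ht
    rw [hcnt t ht1 ht2]
    by_cases hcase : n + 1 - t ≤ n - m
    · have hle : (Finset.univ.filter (fun a => n + 1 - t < π a)).card ≤ m := by
        have := Finset.card_filter_le (Finset.univ : Finset (Fin m)) (fun a => n + 1 - t < π a)
        simpa using this
      omega
    · have h3 := hPF (n + 1 - t) (by omega) (by omega)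
      have h4 := hcardsplit (n + 1 - t)
      omega
  · intro hE
    refine ⟨hrange, fun i hi1 hi2 => ?_⟩
    have ht := hE (n + 1 - i) (Finset.mem_Icc.2 ⟨by omega, by omega⟩)
    rw [hcnt _ (by omega) (by omega)] at ht
    have h4 := hcardsplit i
    rw [show n + 1 - (n + 1 - i) = i by omega] at ht
    omega

end PFaux

namespace PFaux

lemma card_PF_total {m n : ℕ} (hm : 1 ≤ m) (hmn : m ≤ n) :
    (n + 1) * Nat.card {π : Fin m → ℕ // IsPF m n π} = (n + 1 - m) * (n + 1) ^ m := by
  classical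
  have hcard : Nat.card {π : Fin m → ℕ // IsPF m n π}
      = Nat.card {τ : Fin m → ZMod (n + 1) // emptyAt (n + 1) (cnt m (n + 1) τ) 0} := by
    apply Nat.card_eq_of_bijective
      (fun p => ⟨fun a => ((p.1 a : ℕ) : ZMod (n + 1)),
        (isPF_iff_empty hm hmn p.1 p.2.1).1 p.2⟩)
    constructor
    · intro p1 p2 h
      apply Subtype.ext
      funext a
      have h2 := congrFun (congrArg Subtype.val h) a
      simp only at h2
      have b1 := (p1.2.1 a).2
      have b2 := (p2.2.1 a).2
      exact castInj (by omega) (by omega) h2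
    · rintro ⟨τ, hE⟩
      have hnz : ∀ a, τ a ≠ 0 := ne_zero_of_emptyAt_zero hE
      set π : Fin m → ℕ := fun a => (τ a).val with hπ
      have hrange : ∀ a, 1 ≤ π a ∧ π a ≤ n := fun a =>
        ⟨one_le_val (hnz a), by show (τ a).val ≤ n; have := (τ a).val_lt; omega⟩
      have hτeq : (fun a => ((π a : ℕ) : ZMod (n + 1))) = τ := funext fun a => cast_val _
      refine ⟨⟨π, (isPF_iff_empty hm hmn π hrange).2 ?_⟩, ?_⟩
      · rw [hτeq]; exact hE
      · apply Subtype.ext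
        funext a
        simp only
        exact congrFun hτeq a
  rw [hcard, Nat.card_eq_fintype_card, Fintype.card_subtype]
  exact Kcount (by omega)

lemma card_PF_first {m' n j : ℕ} (hm0 : 0 < m' + 1) (hmn : m' + 1 ≤ n) (hj1 : 1 ≤ j)
    (hj2 : j ≤ n - (m' + 1) + 1) :
    (n + 1) * Nat.card {π : Fin (m' + 1) → ℕ // IsPF (m' + 1) n π ∧ π ⟨0, hm0⟩ = j}
      = (n + 1 - m') * (n + 1) ^ m' := by
  classical
  have hz : (⟨0, hm0⟩ : Fin (m' + 1)) = 0 := by ext; simp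
  have hjn : j ≤ n - m' := by omega
  have hjq : j < n + 1 := by omega
  have hu : ((j : ℕ) : ZMod (n + 1)).val = j := ZMod.val_cast_of_lt hjq
  have hcard : Nat.card {π : Fin (m' + 1) → ℕ // IsPF (m' + 1) n π ∧ π ⟨0, hm0⟩ = j}
      = Nat.card {σ : Fin m' → ZMod (n + 1) // emptyAt (n + 1) (cnt m' (n + 1) σ) 0} := by
    have hmem : ∀ (π : Fin (m' + 1) → ℕ), IsPF (m' + 1) n π → π ⟨0, hm0⟩ = j →
        emptyAt (n + 1) (cnt m' (n + 1) (fun a => ((π a.succ : ℕ) : ZMod (n + 1)))) 0 := by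
      intro π hPF h0
      rw [hz] at h0
      have hτ : (fun a : Fin (m' + 1) => ((π a : ℕ) : ZMod (n + 1)))
          = Fin.cons ((j : ℕ) : ZMod (n + 1)) (fun a => ((π a.succ : ℕ) : ZMod (n + 1))) := by
        funext a
        refine Fin.cases ?_ ?_ a
        · simp [h0]
        · intro i; simp
      have hE := (isPF_iff_empty hm0 hmn π hPF.1).1 hPF
      rw [hτ] at hE
      exact emptyAt_mono (fun z => by rw [cnt_cons]; omega) hE
    apply Nat.card_eq_of_bijective
      (fun p => ⟨fun a => ((p.1 a.succ : ℕ) : ZMod (n + 1)), hmem p.1 p.2.1 p.2.2⟩)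
    constructor
    · intro p1 p2 h
      apply Subtype.ext
      funext a
      refine Fin.cases ?_ ?_ a
      · rw [show (0 : Fin (m' + 1)) = ⟨0, hm0⟩ from hz.symm, p1.2.2, p2.2.2]
      · intro i
        have h2 := congrFun (congrArg Subtype.val h) i
        simp only at h2
        have b1 := (p1.2.1.1 i.succ).2
        have b2 := (p2.2.1.1 i.succ).2
        exact castInj (by omega) (by omega) h2
    · rintro ⟨σ, hE⟩
      have hnz : ∀ a, σ a ≠ 0 := ne_zero_of_emptyAt_zero hE
      set π : Fin (m' + 1) → ℕ := Fin.cons j (fun a => (σ a).val) with hπ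
      have hrange : ∀ a, 1 ≤ π a ∧ π a ≤ n := by
        intro a
        refine Fin.cases ?_ ?_ a
        · simp only [hπ, Fin.cons_zero]
          omega
        · intro i
          simp only [hπ, Fin.cons_succ]
          exact ⟨one_le_val (hnz i), by have := (σ i).val_lt; omega⟩
      have hτfull : (fun a : Fin (m' + 1) => ((π a : ℕ) : ZMod (n + 1)))
          = Fin.cons ((j : ℕ) : ZMod (n + 1)) σ := by
        funext a
        refine Fin.cases ?_ ?_ a
        · simp [hπ]
        · intro i
          simp [hπ, cast_val]
      obtain ⟨e, he, hje⟩ := exists_empty_ge (sum_cnt σ) (by omega) (show j + m' < n + 1 by omega)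
      have hE' : emptyAt (n + 1) (cnt (m' + 1) (n + 1) (Fin.cons ((j : ℕ) : ZMod (n + 1)) σ)) 0 := by
        have hdelta := emptyAt_add_delta (u := ((j : ℕ) : ZMod (n + 1))) (e := e) hE he
          (by rw [hu]; exact hj1) (by rw [hu]; exact hje)
        have hfun : (fun z => cnt m' (n + 1) σ z + if ((j : ℕ) : ZMod (n + 1)) = z then 1 else 0)
            = cnt (m' + 1) (n + 1) (Fin.cons ((j : ℕ) : ZMod (n + 1)) σ) := by
          funext z
          rw [cnt_cons]
        rwa [hfun] at hdelta
      have hPF : IsPF (m' + 1) n π := (isPF_iff_empty hm0 hmn π hrange).2 (by rw [hτfull]; exact hE')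
      have h0 : π ⟨0, hm0⟩ = j := by rw [hz]; simp [hπ]
      refine ⟨⟨π, hPF, h0⟩, ?_⟩
      apply Subtype.ext
      funext a
      simp only [hπ, Fin.cons_succ]
      exact cast_val _
  have hlt : m' < n + 1 := Nat.lt_of_lt_of_le (Nat.lt_succ_self m') hmn |>.trans_le (Nat.le_succ n)
  rw [hcard]
  have hK := Kcount (q := n + 1) (k := m') hlt
  rw [Nat.card_eq_fintype_card, Fintype.card_subtype]
  exact hK

end PFaux

/-- For `π` uniform on `PF(m,n)`, `P(π₁ = j) = (n-m+2)/((n-m+1)(n+1))` for every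
`j` with `1 ≤ j ≤ n - m + 1`; in particular `P(π₁ = 1) = ⋯ = P(π₁ = n-m+1)`. -/
theorem prob_first_coord_flat (m n j : ℕ) (hm : 1 ≤ m) (hmn : m ≤ n)
    (hj1 : 1 ≤ j) (hj2 : j ≤ n - m + 1) :
    (Nat.card {π : Fin m → ℕ // IsPF m n π ∧ π ⟨0, hm⟩ = j} : ℚ) /
        (Nat.card {π : Fin m → ℕ // IsPF m n π} : ℚ) =
      ((n : ℚ) - m + 2) / ((((n : ℚ) - m + 1)) * ((n : ℚ) + 1)) := by
  obtain ⟨m', rfl⟩ : ∃ m', m = m' + 1 := ⟨m - 1, by omega⟩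
  have hT := PFaux.card_PF_total hm hmn
  have hN := PFaux.card_PF_first (hm0 := hm) hmn hj1 hj2
  set T := Nat.card {π : Fin (m' + 1) → ℕ // IsPF (m' + 1) n π} with hTdef
  set N := Nat.card {π : Fin (m' + 1) → ℕ // IsPF (m' + 1) n π ∧ π ⟨0, hm⟩ = j} with hNdef
  clear_value T N
  clear hTdef hNdef
  have hq0 : ((n : ℚ) + 1) ≠ 0 := by positivity
  have hm'n : (m' : ℚ) + 1 ≤ (n : ℚ) := by exact_mod_cast hmn
  have hnm' : (n : ℚ) - m' ≠ 0 := by intro h; nlinarith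
  have hTQ : ((n : ℚ) + 1) * T = ((n : ℚ) - m') * ((n : ℚ) + 1) ^ (m' + 1) := by
    rw [show ((n : ℚ) - m') = ((n + 1 - (m' + 1) : ℕ) : ℚ) by
      rw [Nat.cast_sub (by omega)]; push_cast; ring]
    exact_mod_cast hT
  have hNQ : ((n : ℚ) + 1) * N = ((n : ℚ) + 1 - m') * ((n : ℚ) + 1) ^ m' := by
    rw [show ((n : ℚ) + 1 - m') = ((n + 1 - m' : ℕ) : ℚ) by
      rw [Nat.cast_sub (by omega)]; push_cast; ring]
    exact_mod_cast hN
  have hT0 : (T : ℚ) ≠ 0 := by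
    intro h
    rw [h, mul_zero] at hTQ
    exact (mul_ne_zero hnm' (pow_ne_zero _ hq0)) hTQ.symm
  have hden : ((n : ℚ) - (m' + 1 : ℕ) + 1) * ((n : ℚ) + 1) ≠ 0 := by
    apply mul_ne_zero _ hq0
    push_cast
    intro h
    apply hnm'
    linarith
  rw [div_eq_div_iff hT0 hden]
  push_cast
  apply mul_left_cancel₀ hq0
  linear_combination ((n : ℚ) - m') * ((n : ℚ) + 1) * hNQ - ((n : ℚ) - m' + 1) * hTQ
end
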